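/- arXiv:1002.2576 — 3 statements merged into one kernel-verified Lean document; each statement's English description precedes it below -/
import Mathlib

section
/- Let X be a left dual and Y a right dual object in a monoidal category, with chosen dualities p = ⟨X, U, η, ε⟩ and q = ⟨V, Y, η', ε'⟩. A morphism f : X ⊗ Y → Y ⊗ X is an X-left isomorphism (i.e., l_p(f) is an isomorphism) if and only if it is a Y-right isomorphism (i.e., r_q(f) is an isomorphism). Explicitly, if l_p(f) is invertible then r_{pq}((l_p(f))⁻¹) is inverse to r_q(f), and if r_q(f) is invertible then l_{qp}((r_q(f))⁻¹) is inverse to l_p(f). -/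
open CategoryTheory MonoidalCategory ExactPairing


open CategoryTheory MonoidalCategory

namespace Stmt3

variable {C : Type*} [Category C] [MonoidalCategory C]

/-- `l_p = a_p ∘ b_p⁻¹ : Hom(X ⊗ U, V ⊗ X) → Hom(U ⊗ Y, Y ⊗ V)` for a duality
`p = ⟨X, Y, η, ε⟩` (so `η : 𝟙 ⟶ Y ⊗ X`, `ε : X ⊗ Y ⟶ 𝟙`). -/
def lp {X Y U V : C} (η : 𝟙_ C ⟶ Y ⊗ X) (ε : X ⊗ Y ⟶ 𝟙_ C)
    (f : X ⊗ U ⟶ V ⊗ X) : U ⊗ Y ⟶ Y ⊗ V :=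
  (λ_ (U ⊗ Y)).inv ≫ η ▷ (U ⊗ Y) ≫ (α_ Y X (U ⊗ Y)).hom ≫
    Y ◁ ((α_ X U Y).inv ≫ f ▷ Y ≫ (α_ V X Y).hom ≫ V ◁ ε ≫ (ρ_ V).hom)

/-- `r_p = b_p ∘ a_p⁻¹ : Hom(U ⊗ X, X ⊗ V) → Hom(Y ⊗ U, V ⊗ Y)` for a duality
`p = ⟨Y, X, η, ε⟩` (so `η : 𝟙 ⟶ X ⊗ Y`, `ε : Y ⊗ X ⟶ 𝟙`). -/
def rp {X Y U V : C} (η : 𝟙_ C ⟶ X ⊗ Y) (ε : Y ⊗ X ⟶ 𝟙_ C)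
    (f : U ⊗ X ⟶ X ⊗ V) : Y ⊗ U ⟶ V ⊗ Y :=
  (ρ_ (Y ⊗ U)).inv ≫ (Y ⊗ U) ◁ η ≫ (α_ (Y ⊗ U) X Y).inv ≫
    ((α_ Y U X).hom ≫ Y ◁ f ≫ (α_ Y X V).inv ≫ ε ▷ V ≫ (λ_ V).hom) ▷ Y

def tensorExactPairing (A A' B B' : C) [ExactPairing A A'] [ExactPairing B B'] :
    ExactPairing (A ⊗ B) (B' ⊗ A') where
  coevaluation' := η_ A A' ⊗≫ A ◁ η_ B B' ▷ A' ⊗≫ 𝟙 ((A ⊗ B) ⊗ (B' ⊗ A'))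
  evaluation' := 𝟙 ((B' ⊗ A') ⊗ (A ⊗ B)) ⊗≫ B' ◁ ε_ A A' ▷ B ⊗≫ ε_ B B'
  coevaluation_evaluation' := by
    calc _ = 𝟙 _ ⊗≫ ((B' ⊗ A' : C)) ◁ η_ A A' ⊗≫
          B' ◁ (((A' ⊗ A : C)) ◁ (η_ B B' ▷ A') ≫ ε_ A A' ▷ ((B ⊗ B' : C) ⊗ A')) ⊗≫
          ε_ B B' ▷ ((B' ⊗ A' : C)) ⊗≫ 𝟙 _ := by monoidal
      _ = 𝟙 _ ⊗≫ B' ◁ (A' ◁ η_ A A' ⊗≫ ε_ A A' ▷ A') ⊗≫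
          (B' ◁ η_ B B' ⊗≫ ε_ B B' ▷ B') ▷ A' ⊗≫ 𝟙 _ := by
            rw [whisker_exchange]; monoidal
      _ = _ := by rw [coevaluation_evaluation'', coevaluation_evaluation'']; monoidal
  evaluation_coevaluation' := by
    calc _ = 𝟙 _ ⊗≫ η_ A A' ▷ ((A : C) ⊗ B) ⊗≫
          A ◁ (η_ B B' ▷ ((A' ⊗ A : C) ⊗ B) ≫ ((B ⊗ B' : C)) ◁ (ε_ A A' ▷ B)) ⊗≫
          A ◁ (B ◁ ε_ B B') ⊗≫ 𝟙 _ := by monoidal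
      _ = 𝟙 _ ⊗≫ (η_ A A' ▷ A ⊗≫ A ◁ ε_ A A') ▷ B ⊗≫
          A ◁ (η_ B B' ▷ B ⊗≫ B ◁ ε_ B B') ⊗≫ 𝟙 _ := by
            rw [← whisker_exchange]; monoidal
      _ = _ := by rw [evaluation_coevaluation'', evaluation_coevaluation'']; monoidal

section Aux

variable {X U Y V : C} [ExactPairing U X] [ExactPairing Y V]

local instance i1 : ExactPairing (Y ⊗ U) (X ⊗ V) := tensorExactPairing Y V U X
local instance i2 : ExactPairing (U ⊗ Y) (V ⊗ X) := tensorExactPairing U X Y V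
abbrev hrYU : HasRightDual (Y ⊗ U : C) := @HasRightDual.mk _ _ _ _ (X ⊗ V) (i1 (X := X) (V := V))
abbrev hrUY : HasRightDual (U ⊗ Y : C) := @HasRightDual.mk _ _ _ _ (V ⊗ X) (i2 (X := X) (V := V))
abbrev hlXV : HasLeftDual (X ⊗ V : C) := @HasLeftDual.mk _ _ _ _ (Y ⊗ U) (i1 (U := U) (Y := Y))
abbrev hlVX : HasLeftDual (V ⊗ X : C) := @HasLeftDual.mk _ _ _ _ (U ⊗ Y) (i2 (U := U) (Y := Y))

theorem i1_coev : @ExactPairing.coevaluation' C _ _ _ _ (i1 (X := X) (U := U) (Y := Y) (V := V)) =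
    η_ Y V ⊗≫ Y ◁ η_ U X ▷ V ⊗≫ 𝟙 _ := rfl
theorem i1_ev : @ExactPairing.evaluation' C _ _ _ _ (i1 (X := X) (U := U) (Y := Y) (V := V)) =
    𝟙 _ ⊗≫ X ◁ ε_ Y V ▷ U ⊗≫ ε_ U X := rfl
theorem i2_coev : @ExactPairing.coevaluation' C _ _ _ _ (i2 (X := X) (U := U) (Y := Y) (V := V)) =
    η_ U X ⊗≫ U ◁ η_ Y V ▷ X ⊗≫ 𝟙 _ := rfl
theorem i2_ev : @ExactPairing.evaluation' C _ _ _ _ (i2 (X := X) (U := U) (Y := Y) (V := V)) =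
    𝟙 _ ⊗≫ V ◁ ε_ U X ▷ Y ⊗≫ ε_ Y V := rfl

theorem mate_lp (f : X ⊗ Y ⟶ Y ⊗ X) :
    @rightAdjointMate C _ _ _ _ (hrYU (X := X) (V := V)) (hrUY (X := X) (V := V))
      (lp (η_ U X) (ε_ U X) f) = rp (η_ Y V) (ε_ Y V) f := by
  calc @rightAdjointMate C _ _ _ _ (hrYU (X := X) (V := V)) (hrUY (X := X) (V := V)) (lp (η_ U X) (ε_ U X) f) = 𝟙 _ ⊗≫ ((V ⊗ X : C)) ◁ η_ Y V
        ⊗≫ ((V ⊗ X : C)) ◁ (𝟙_ C ◁ (Y ◁ (η_ U X ▷ V)) ≫ η_ U X ▷ (Y ⊗ ((U ⊗ X : C) ⊗ V)))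
        ⊗≫ ((V ⊗ X : C)) ◁ (U ◁ (f ▷ ((U ⊗ X : C) ⊗ V)))
        ⊗≫ ((V ⊗ X : C)) ◁ (U ◁ (Y ◁ (ε_ U X ▷ ((X ⊗ V : C)))))
        ⊗≫ V ◁ (ε_ U X ▷ (Y ⊗ ((X ⊗ V : C))))
        ⊗≫ ε_ Y V ▷ ((X ⊗ V : C)) ⊗≫ 𝟙 _ := by
        dsimp only [rightAdjointMate, lp, hrYU, hrUY, HasRightDual.rightDual, i1, i2,
          tensorExactPairing, ExactPairing.coevaluation, ExactPairing.evaluation]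
        simp only [i1_coev, i1_ev, i2_coev, i2_ev]
        monoidal
    _ = 𝟙 _ ⊗≫ ((V ⊗ X : C)) ◁ η_ Y V
        ⊗≫ ((V ⊗ X : C)) ◁ (η_ U X ▷ ((Y ⊗ V : C)))
        ⊗≫ ((V ⊗ X : C)) ◁ (((U ⊗ (X ⊗ Y) : C)) ◁ (η_ U X ▷ V) ≫ (U ◁ f) ▷ ((U ⊗ X : C) ⊗ V))
        ⊗≫ ((V ⊗ X : C)) ◁ (U ◁ (Y ◁ (ε_ U X ▷ ((X ⊗ V : C)))))
        ⊗≫ V ◁ (ε_ U X ▷ (Y ⊗ ((X ⊗ V : C))))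
        ⊗≫ ε_ Y V ▷ ((X ⊗ V : C)) ⊗≫ 𝟙 _ := by
        rw [whisker_exchange]; monoidal
    _ = 𝟙 _ ⊗≫ ((V ⊗ X : C)) ◁ η_ Y V
        ⊗≫ ((V ⊗ X : C)) ◁ (η_ U X ▷ ((Y ⊗ V : C)))
        ⊗≫ (((V ⊗ X : C)) ⊗ U) ◁ (f ▷ V)
        ⊗≫ (((V ⊗ X : C)) ⊗ ((U ⊗ Y : C))) ◁ ((X ◁ η_ U X ⊗≫ ε_ U X ▷ X) ▷ V)
        ⊗≫ V ◁ (ε_ U X ▷ (Y ⊗ ((X ⊗ V : C))))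
        ⊗≫ ε_ Y V ▷ ((X ⊗ V : C)) ⊗≫ 𝟙 _ := by
        rw [whisker_exchange]; monoidal
    _ = 𝟙 _ ⊗≫ ((V ⊗ X : C)) ◁ η_ Y V
        ⊗≫ ((V ⊗ X : C)) ◁ (η_ U X ▷ ((Y ⊗ V : C)))
        ⊗≫ V ◁ (((X ⊗ U : C)) ◁ (f ▷ V) ≫ ε_ U X ▷ ((Y ⊗ X : C) ⊗ V))
        ⊗≫ ε_ Y V ▷ ((X ⊗ V : C)) ⊗≫ 𝟙 _ := by
        rw [coevaluation_evaluation'']; monoidal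
    _ = 𝟙 _ ⊗≫ ((V ⊗ X : C)) ◁ η_ Y V
        ⊗≫ V ◁ ((X ◁ η_ U X ⊗≫ ε_ U X ▷ X) ▷ ((Y ⊗ V : C)))
        ⊗≫ V ◁ (f ▷ V)
        ⊗≫ ε_ Y V ▷ ((X ⊗ V : C)) ⊗≫ 𝟙 _ := by
        rw [whisker_exchange]; monoidal
    _ = 𝟙 _ ⊗≫ ((V ⊗ X : C)) ◁ η_ Y V
        ⊗≫ V ◁ (f ▷ V)
        ⊗≫ ε_ Y V ▷ ((X ⊗ V : C)) ⊗≫ 𝟙 _ := by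
        rw [coevaluation_evaluation'']; monoidal
    _ = rp (η_ Y V) (ε_ Y V) f := by
        dsimp only [rp]; monoidal

theorem mate_rp (f : X ⊗ Y ⟶ Y ⊗ X) :
    @leftAdjointMate C _ _ _ _ (hlVX (U := U) (Y := Y)) (hlXV (U := U) (Y := Y)) (rp (η_ Y V) (ε_ Y V) f) = lp (η_ U X) (ε_ U X) f := by
  calc @leftAdjointMate C _ _ _ _ (hlVX (U := U) (Y := Y)) (hlXV (U := U) (Y := Y)) (rp (η_ Y V) (ε_ Y V) f) = (𝟙 (Y ⊗ U : C) ⊗≫ η_ U X ▷ ((Y ⊗ U : C))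
        ⊗≫ U ◁ (η_ Y V ▷ (X ⊗ (𝟙_ C ⊗ ((Y ⊗ U : C)))) ≫ ((Y ⊗ V : C)) ◁ (X ◁ (η_ Y V ▷ ((Y ⊗ U : C)))))
        ⊗≫ U ◁ (((Y ⊗ V : C)) ◁ (f ▷ (V ⊗ ((Y ⊗ U : C)))))
        ⊗≫ U ◁ (Y ◁ (ε_ Y V ▷ ((X ⊗ V : C) ⊗ ((Y ⊗ U : C)))))
        ⊗≫ U ◁ (Y ◁ (X ◁ (ε_ Y V ▷ U)))
        ⊗≫ U ◁ (Y ◁ ε_ U X) ⊗≫ 𝟙 (U ⊗ Y : C) : (Y ⊗ U : C) ⟶ U ⊗ Y) := by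
        dsimp only [leftAdjointMate, rp, hlVX, hlXV, HasLeftDual.leftDual, i1, i2,
          tensorExactPairing, ExactPairing.coevaluation, ExactPairing.evaluation]
        simp only [i1_coev, i1_ev, i2_coev, i2_ev]
        monoidal
    _ = 𝟙 _ ⊗≫ η_ U X ▷ ((Y ⊗ U : C))
        ⊗≫ U ◁ (X ◁ (η_ Y V ▷ ((Y ⊗ U : C))))
        ⊗≫ U ◁ (η_ Y V ▷ ((X ⊗ Y : C) ⊗ (V ⊗ ((Y ⊗ U : C)))) ≫ ((Y ⊗ V : C)) ◁ (f ▷ (V ⊗ ((Y ⊗ U : C)))))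
        ⊗≫ U ◁ (Y ◁ (ε_ Y V ▷ ((X ⊗ V : C) ⊗ ((Y ⊗ U : C)))))
        ⊗≫ U ◁ (Y ◁ (X ◁ (ε_ Y V ▷ U)))
        ⊗≫ U ◁ (Y ◁ ε_ U X) ⊗≫ 𝟙 _ := by
        rw [← whisker_exchange]; monoidal
    _ = 𝟙 _ ⊗≫ η_ U X ▷ ((Y ⊗ U : C))
        ⊗≫ U ◁ (X ◁ (η_ Y V ▷ ((Y ⊗ U : C))))
        ⊗≫ U ◁ (f ▷ (V ⊗ ((Y ⊗ U : C))))
        ⊗≫ U ◁ ((η_ Y V ▷ Y ⊗≫ Y ◁ ε_ Y V) ▷ ((X ⊗ V : C) ⊗ ((Y ⊗ U : C))))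
        ⊗≫ U ◁ (Y ◁ (X ◁ (ε_ Y V ▷ U)))
        ⊗≫ U ◁ (Y ◁ ε_ U X) ⊗≫ 𝟙 _ := by
        rw [← whisker_exchange]; monoidal
    _ = 𝟙 _ ⊗≫ η_ U X ▷ ((Y ⊗ U : C))
        ⊗≫ U ◁ (X ◁ (η_ Y V ▷ ((Y ⊗ U : C))))
        ⊗≫ U ◁ (f ▷ ((V ⊗ Y : C) ⊗ U) ≫ ((Y ⊗ X : C)) ◁ (ε_ Y V ▷ U))
        ⊗≫ U ◁ (Y ◁ ε_ U X) ⊗≫ 𝟙 _ := by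
        rw [evaluation_coevaluation'']; monoidal
    _ = 𝟙 _ ⊗≫ η_ U X ▷ ((Y ⊗ U : C))
        ⊗≫ ((U ⊗ X : C)) ◁ ((η_ Y V ▷ Y ⊗≫ Y ◁ ε_ Y V) ▷ U)
        ⊗≫ U ◁ (f ▷ U)
        ⊗≫ U ◁ (Y ◁ ε_ U X) ⊗≫ 𝟙 _ := by
        rw [← whisker_exchange]; monoidal
    _ = 𝟙 _ ⊗≫ η_ U X ▷ ((Y ⊗ U : C))
        ⊗≫ U ◁ (f ▷ U)
        ⊗≫ U ◁ (Y ◁ ε_ U X) ⊗≫ 𝟙 _ := by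
        rw [evaluation_coevaluation'']; monoidal
    _ = lp (η_ U X) (ε_ U X) f := by
        dsimp only [lp]; monoidal

theorem key (f : X ⊗ Y ⟶ Y ⊗ X) :
    IsIso (lp (η_ U X) (ε_ U X) f) ↔ IsIso (rp (η_ Y V) (ε_ Y V) f) := by
  letI : HasRightDual (Y ⊗ U : C) := hrYU (X := X) (V := V)
  letI : HasRightDual (U ⊗ Y : C) := hrUY (X := X) (V := V)
  letI : HasLeftDual (X ⊗ V : C) := hlXV (U := U) (Y := Y)
  letI : HasLeftDual (V ⊗ X : C) := hlVX (U := U) (Y := Y)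
  constructor
  · intro h
    rw [← mate_lp (U := U) (V := V) f]
    refine ⟨(inv (lp (η_ U X) (ε_ U X) f))ᘁ, ?_, ?_⟩
    · rw [← comp_rightAdjointMate, IsIso.inv_hom_id, rightAdjointMate_id]; rfl
    · rw [← comp_rightAdjointMate, IsIso.hom_inv_id, rightAdjointMate_id]; rfl
  · intro h
    rw [← mate_rp (U := U) (V := V) f]
    refine ⟨ᘁ(inv (rp (η_ Y V) (ε_ Y V) f)), ?_, ?_⟩
    · rw [← comp_leftAdjointMate, IsIso.inv_hom_id, leftAdjointMate_id]; rfl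
    · rw [← comp_leftAdjointMate, IsIso.hom_inv_id, leftAdjointMate_id]; rfl

end Aux

/-- if `X` is a left dual (via `p = ⟨X, U, η, ε⟩`) and `Y` is a right dual
(via `q = ⟨V, Y, η', ε'⟩`), then a morphism `f : X ⊗ Y ⟶ Y ⊗ X` is an `X`-left
isomorphism (`l_p(f)` is an isomorphism) iff it is a `Y`-right isomorphism
(`r_q(f)` is an isomorphism). -/
theorem statement3 {X U Y V : C}
    (η : 𝟙_ C ⟶ U ⊗ X) (ε : X ⊗ U ⟶ 𝟙_ C)
    (η' : 𝟙_ C ⟶ Y ⊗ V) (ε' : V ⊗ Y ⟶ 𝟙_ C)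
    (zig : (ρ_ X).inv ≫ X ◁ η ≫ (α_ X U X).inv ≫ ε ▷ X ≫ (λ_ X).hom = 𝟙 X)
    (zag : (λ_ U).inv ≫ η ▷ U ≫ (α_ U X U).hom ≫ U ◁ ε ≫ (ρ_ U).hom = 𝟙 U)
    (zig' : (ρ_ V).inv ≫ V ◁ η' ≫ (α_ V Y V).inv ≫ ε' ▷ V ≫ (λ_ V).hom = 𝟙 V)
    (zag' : (λ_ Y).inv ≫ η' ▷ Y ≫ (α_ Y V Y).hom ≫ Y ◁ ε' ≫ (ρ_ Y).hom = 𝟙 Y)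
    (f : X ⊗ Y ⟶ Y ⊗ X) :
    IsIso (lp η ε f) ↔ IsIso (rp η' ε' f) := by
  letI pUX : ExactPairing U X :=
    { coevaluation' := η
      evaluation' := ε
      coevaluation_evaluation' := by
        rw [← cancel_epi (ρ_ X).inv, ← cancel_mono (λ_ X).hom]; simpa using zig
      evaluation_coevaluation' := by
        rw [← cancel_epi (λ_ U).inv, ← cancel_mono (ρ_ U).hom]; simpa using zag }
  letI pYV : ExactPairing Y V :=
    { coevaluation' := η'
      evaluation' := ε'
      coevaluation_evaluation' := by
        rw [← cancel_epi (ρ_ V).inv, ← cancel_mono (λ_ V).hom]; simpa using zig'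
      evaluation_coevaluation' := by
        rw [← cancel_epi (λ_ Y).inv, ← cancel_mono (ρ_ Y).hom]; simpa using zag' }
  exact key f

end Stmt3
end

section
/- Let H be a bialgebra (over a commutative ring, or a Hopf object in a symmetric monoidal category), σ the swap map on H ⊗ H, and τ = σ ∘ (id ⊗ ∇) ∘ (Δ ⊗ id) : H ⊗ H → H ⊗ H, i.e., τ(x ⊗ y) = Σ x₍₂₎ y ⊗ x₍₁₎ in Sweedler notation. Then τ satisfies the pentagon-type equation (τ ⊗ id) ∘ (id ⊗ σ) ∘ (τ ⊗ id) = (id ⊗ τ) ∘ (τ ⊗ id) ∘ (id ⊗ τ). -/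
open TensorProduct

namespace Stmt6

variable {R H : Type*} [CommRing R] [Ring H] [Bialgebra R H]

/-- The tensor flip `σ : H ⊗ H → H ⊗ H`. -/
noncomputable def σ : H ⊗[R] H →ₗ[R] H ⊗[R] H := (TensorProduct.comm R H H).toLinearMap

/-- `τ = σ ∘ (id ⊗ ∇) ∘ (Δ ⊗ id)`, i.e. `τ(x ⊗ y) = Σ x₍₂₎ y ⊗ x₍₁₎`. -/
noncomputable def τ : H ⊗[R] H →ₗ[R] H ⊗[R] H :=
  σ (R := R) ∘ₗ LinearMap.lTensor H (LinearMap.mul' R H) ∘ₗ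
    (TensorProduct.assoc R H H H).toLinearMap ∘ₗ
      LinearMap.rTensor H (Coalgebra.comul (R := R) (A := H))

/-- A representation of `comul (a*b)` from representations of `a` and `b`. -/
noncomputable def mulRepr {ι κ : Type*} {a b : H} (r1 : Coalgebra.Repr R a ι)
    (r2 : Coalgebra.Repr R b κ) :
    Coalgebra.Repr R (a * b) (ι × κ) where
  index := r1.index ×ˢ r2.index
  left := fun p => r1.left p.1 * r2.left p.2
  right := fun p => r1.right p.1 * r2.right p.2
  eq := by
    rw [Bialgebra.comul_mul, ← r1.eq, ← r2.eq, Finset.sum_mul_sum]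
    simp [Finset.sum_product, Algebra.TensorProduct.tmul_mul_tmul]

lemma τ_apply {ι : Type*} (x y : H) (r : Coalgebra.Repr R x ι) :
    τ (R := R) (x ⊗ₜ[R] y) = ∑ i ∈ r.index, (r.right i * y) ⊗ₜ[R] r.left i := by
  simp only [τ, σ, LinearMap.comp_apply, LinearMap.rTensor_tmul, ← r.eq, sum_tmul, map_sum,
    assoc_tmul, LinearMap.lTensor_tmul, LinearMap.mul'_apply, LinearEquiv.coe_coe, comm_tmul]

lemma aux {ι κ Λ : Type*} (b c : H) {x : H} (r : Coalgebra.Repr R x ι)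
    (a₁ : (i : ι) → Coalgebra.Repr R (r.left i) κ)
    (a₂ : (i : ι) → Coalgebra.Repr R (r.right i) Λ) :
    ∑ i ∈ r.index, ∑ k ∈ (a₂ i).index,
      (((a₂ i).right k * b) ⊗ₜ[R] ((a₂ i).left k * c)) ⊗ₜ[R] r.left i =
    ∑ i ∈ r.index, ∑ k ∈ (a₁ i).index,
      ((r.right i * b) ⊗ₜ[R] ((a₁ i).right k * c)) ⊗ₜ[R] (a₁ i).left k := by
  have h := Coalgebra.sum_tmul_tmul_eq r a₁ a₂
  apply_fun (LinearMap.rTensor H (σ (R := R)) ∘ₗ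
    (TensorProduct.comm R H (H ⊗[R] H)).toLinearMap ∘ₗ
    LinearMap.lTensor H
      (TensorProduct.map (LinearMap.mulRight R c) (LinearMap.mulRight R b))) at h
  simpa [σ, map_sum] using h.symm

/-- `f ⊗ id` on `(H ⊗ H) ⊗ H`. -/
noncomputable def L1 (f : H ⊗[R] H →ₗ[R] H ⊗[R] H) :
    (H ⊗[R] H) ⊗[R] H →ₗ[R] (H ⊗[R] H) ⊗[R] H := LinearMap.rTensor H f

/-- `id ⊗ f` on `(H ⊗ H) ⊗ H`. -/
noncomputable def L2 (f : H ⊗[R] H →ₗ[R] H ⊗[R] H) :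
    (H ⊗[R] H) ⊗[R] H →ₗ[R] (H ⊗[R] H) ⊗[R] H :=
  (TensorProduct.assoc R H H H).symm.toLinearMap ∘ₗ LinearMap.lTensor H f ∘ₗ
    (TensorProduct.assoc R H H H).toLinearMap

/-- for a bialgebra `H`, the map `τ(x ⊗ y) = Σ x₍₂₎ y ⊗ x₍₁₎` satisfies the
pentagon-type equation `(τ ⊗ id)(id ⊗ σ)(τ ⊗ id) = (id ⊗ τ)(τ ⊗ id)(id ⊗ τ)`. -/
theorem statement6 :
    L1 (τ (R := R) (H := H)) ∘ₗ L2 (σ (R := R)) ∘ₗ L1 (τ (R := R)) =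
      L2 (τ (R := R)) ∘ₗ L1 (τ (R := R)) ∘ₗ L2 (τ (R := R)) := by
  apply TensorProduct.ext_threefold
  intro x y z
  let rx := Coalgebra.Repr.arbitrary R x
  let ry := Coalgebra.Repr.arbitrary R y
  let a₁ : (i : H × H) → Coalgebra.Repr R (rx.left i) (H × H) := fun i => Coalgebra.Repr.arbitrary R _
  let a₂ : (i : H × H) → Coalgebra.Repr R (rx.right i) (H × H) := fun i => Coalgebra.Repr.arbitrary R _
  have step1 : L1 (τ (R := R)) ((x ⊗ₜ[R] y) ⊗ₜ[R] z) =
      ∑ i ∈ rx.index, ((rx.right i * y) ⊗ₜ[R] rx.left i) ⊗ₜ[R] z := by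
    simp only [L1, LinearMap.rTensor_tmul, τ_apply x y rx, sum_tmul]
  have step2 : L2 (σ (R := R)) (∑ i ∈ rx.index, ((rx.right i * y) ⊗ₜ[R] rx.left i) ⊗ₜ[R] z) =
      ∑ i ∈ rx.index, ((rx.right i * y) ⊗ₜ[R] z) ⊗ₜ[R] rx.left i := by
    simp [L2, σ, map_sum]
  have step3 : L1 (τ (R := R)) (∑ i ∈ rx.index, ((rx.right i * y) ⊗ₜ[R] z) ⊗ₜ[R] rx.left i) =
      ∑ i ∈ rx.index, ∑ p ∈ (a₂ i).index ×ˢ ry.index,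
        ((((a₂ i).right p.1 * ry.right p.2) * z) ⊗ₜ[R]
          ((a₂ i).left p.1 * ry.left p.2)) ⊗ₜ[R] rx.left i := by
    simp only [L1, map_sum, LinearMap.rTensor_tmul]
    refine Finset.sum_congr rfl fun i _ => ?_
    rw [τ_apply _ z (mulRepr (a₂ i) ry), sum_tmul]
    rfl
  have reorder : (∑ i ∈ rx.index, ∑ p ∈ (a₂ i).index ×ˢ ry.index,
        ((((a₂ i).right p.1 * ry.right p.2) * z) ⊗ₜ[R]
          ((a₂ i).left p.1 * ry.left p.2)) ⊗ₜ[R] rx.left i) =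
      ∑ j ∈ ry.index, ∑ i ∈ rx.index, ∑ k ∈ (a₂ i).index,
        (((a₂ i).right k * (ry.right j * z)) ⊗ₜ[R]
          ((a₂ i).left k * ry.left j)) ⊗ₜ[R] rx.left i := by
    simp only [Finset.sum_product, mul_assoc]
    rw [Finset.sum_congr rfl fun i _ => Finset.sum_comm, Finset.sum_comm]
  have step4 : L2 (τ (R := R)) ((x ⊗ₜ[R] y) ⊗ₜ[R] z) =
      ∑ j ∈ ry.index, (x ⊗ₜ[R] (ry.right j * z)) ⊗ₜ[R] ry.left j := by
    simp only [L2, LinearMap.comp_apply, LinearEquiv.coe_coe, assoc_tmul,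
      LinearMap.lTensor_tmul, τ_apply y z ry, tmul_sum, map_sum, assoc_symm_tmul]
  have step5 : L1 (τ (R := R)) (∑ j ∈ ry.index, (x ⊗ₜ[R] (ry.right j * z)) ⊗ₜ[R] ry.left j) =
      ∑ j ∈ ry.index, ∑ i ∈ rx.index,
        ((rx.right i * (ry.right j * z)) ⊗ₜ[R] rx.left i) ⊗ₜ[R] ry.left j := by
    simp only [L1, map_sum, LinearMap.rTensor_tmul]
    exact Finset.sum_congr rfl fun j _ => by rw [τ_apply _ _ rx, sum_tmul]
  have step6 : L2 (τ (R := R)) (∑ j ∈ ry.index, ∑ i ∈ rx.index,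
        ((rx.right i * (ry.right j * z)) ⊗ₜ[R] rx.left i) ⊗ₜ[R] ry.left j) =
      ∑ j ∈ ry.index, ∑ i ∈ rx.index, ∑ k ∈ (a₁ i).index,
        ((rx.right i * (ry.right j * z)) ⊗ₜ[R]
          ((a₁ i).right k * ry.left j)) ⊗ₜ[R] (a₁ i).left k := by
    simp only [L2, LinearMap.comp_apply, map_sum, LinearEquiv.coe_coe, assoc_tmul,
      LinearMap.lTensor_tmul]
    refine Finset.sum_congr rfl fun j _ => Finset.sum_congr rfl fun i _ => ?_
    rw [τ_apply _ _ (a₁ i), tmul_sum, map_sum]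
    simp only [assoc_symm_tmul]
  simp only [LinearMap.comp_apply]
  rw [step1, step2, step3, reorder, step4, step5, step6]
  exact Finset.sum_congr rfl fun j _ => aux (ry.right j * z) (ry.left j) rx a₁ a₂


end Stmt6
end

section
/- Let H be a finite-dimensional Hopf algebra over a field K with invertible antipode, X its underlying vector space, σ the tensor flip on X ⊗ X, and τ = σ ∘ (id ⊗ ∇) ∘ (Δ ⊗ id). Then (Vect_K, X, σ, τ) is a rigid T-matrix: σ and τ satisfy equations (τ ⊗ 1)(1 ⊗ σ)(σ ⊗ 1) = (1 ⊗ σ)(σ ⊗ 1)(1 ⊗ τ) and (τ ⊗ 1)(1 ⊗ σ)(τ ⊗ 1) = (1 ⊗ τ)(τ ⊗ 1)(1 ⊗ τ), and the partial transposes r_p(τ^{±1}) of τ and its inverse (with respect to the canonical duality p between X* and X) are invertible linear maps. -/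
open TensorProduct

set_option linter.unusedSectionVars false
set_option maxHeartbeats 1000000
set_option synthInstance.maxHeartbeats 80000

namespace Stmt10

variable {K H : Type*} [Field K] [Ring H] [HopfAlgebra K H] [FiniteDimensional K H]

open Coalgebra HopfAlgebra

/-- The partial transpose `r_p` (in the first tensor factor) of a linear map
`f : U ⊗ X → X ⊗ V`, with respect to the canonical duality
`p = ⟨X*, X, coev, eval⟩`; it is the composition `b_p ∘ a_p⁻¹`. -/
noncomputable def rp {X U V : Type*} [AddCommGroup X] [Module K X]
    [FiniteDimensional K X] [AddCommGroup U] [Module K U] [AddCommGroup V] [Module K V]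
    (f : U ⊗[K] X →ₗ[K] X ⊗[K] V) :
    Module.Dual K X ⊗[K] U →ₗ[K] V ⊗[K] Module.Dual K X :=
  LinearMap.rTensor (Module.Dual K X)
      ((TensorProduct.lid K V).toLinearMap ∘ₗ
        LinearMap.rTensor V (contractLeft K X) ∘ₗ
          (TensorProduct.assoc K (Module.Dual K X) X V).symm.toLinearMap ∘ₗ
            LinearMap.lTensor (Module.Dual K X) f ∘ₗ
              (TensorProduct.assoc K (Module.Dual K X) U X).toLinearMap) ∘ₗ
    (TensorProduct.assoc K (Module.Dual K X ⊗[K] U) X (Module.Dual K X)).symm.toLinearMap ∘ₗ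
      LinearMap.lTensor (Module.Dual K X ⊗[K] U) (coevaluation K X) ∘ₗ
        (TensorProduct.rid K (Module.Dual K X ⊗[K] U)).symm.toLinearMap

/-- The tensor flip `σ`. -/
noncomputable def σ : H ⊗[K] H →ₗ[K] H ⊗[K] H := (TensorProduct.comm K H H).toLinearMap

/-- `τ = σ ∘ (id ⊗ ∇) ∘ (Δ ⊗ id)`. -/
noncomputable def τ : H ⊗[K] H →ₗ[K] H ⊗[K] H :=
  σ (K := K) ∘ₗ LinearMap.lTensor H (LinearMap.mul' K H) ∘ₗ
    (TensorProduct.assoc K H H H).toLinearMap ∘ₗ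
      LinearMap.rTensor H (Coalgebra.comul (R := K) (A := H))

/-- `f ⊗ id` on `(H ⊗ H) ⊗ H`. -/
noncomputable def L1 (f : H ⊗[K] H →ₗ[K] H ⊗[K] H) :
    (H ⊗[K] H) ⊗[K] H →ₗ[K] (H ⊗[K] H) ⊗[K] H := LinearMap.rTensor H f

/-- `id ⊗ f` on `(H ⊗ H) ⊗ H`. -/
noncomputable def L2 (f : H ⊗[K] H →ₗ[K] H ⊗[K] H) :
    (H ⊗[K] H) ⊗[K] H →ₗ[K] (H ⊗[K] H) ⊗[K] H :=
  (TensorProduct.assoc K H H H).symm.toLinearMap ∘ₗ LinearMap.lTensor H f ∘ₗ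
    (TensorProduct.assoc K H H H).toLinearMap

section Conv

variable {C A : Type*} [AddCommMonoid C] [Module K C] [Coalgebra K C]
  [AddCommMonoid A] [Module K A]

/-- Convolution of two linear maps from a coalgebra to a module with bilinear product `m`. -/
noncomputable def conv (m : A →ₗ[K] A →ₗ[K] A) (f g : C →ₗ[K] A) : C →ₗ[K] A :=
  TensorProduct.lift m ∘ₗ TensorProduct.map f g ∘ₗ Coalgebra.comul

lemma conv_apply (m : A →ₗ[K] A →ₗ[K] A) (f g : C →ₗ[K] A) {c : C}
    {ι : Type*} (r : Coalgebra.Repr K c ι) :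
    conv m f g c = ∑ i ∈ r.index, m (f (r.left i)) (g (r.right i)) := by
  simp [conv, ← r.eq, map_sum]

/-- The convolution unit. -/
noncomputable def cunit (e : A) : C →ₗ[K] A :=
  LinearMap.toSpanSingleton K A e ∘ₗ Coalgebra.counit

lemma cunit_apply (e : A) (c : C) : cunit (K := K) e c = Coalgebra.counit (R := K) c • e := by
  simp [cunit]

lemma sum_counit_smul_right {c : C} {ι : Type*} (r : Coalgebra.Repr K c ι) :
    ∑ i ∈ r.index, Coalgebra.counit (R := K) (r.left i) • r.right i = c := by
  calc ∑ i ∈ r.index, Coalgebra.counit (R := K) (r.left i) • r.right i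
      = TensorProduct.lid K C
          (∑ i ∈ r.index, Coalgebra.counit (R := K) (r.left i) ⊗ₜ[K] r.right i) := by
        rw [map_sum]; simp
    _ = TensorProduct.lid K C (1 ⊗ₜ[K] c) := by rw [Coalgebra.sum_counit_tmul_eq r]
    _ = c := by simp

lemma sum_counit_smul_left {c : C} {ι : Type*} (r : Coalgebra.Repr K c ι) :
    ∑ i ∈ r.index, Coalgebra.counit (R := K) (r.right i) • r.left i = c := by
  calc ∑ i ∈ r.index, Coalgebra.counit (R := K) (r.right i) • r.left i
      = TensorProduct.rid K C
          (∑ i ∈ r.index, r.left i ⊗ₜ[K] Coalgebra.counit (R := K) (r.right i)) := by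
        rw [map_sum]; simp
    _ = TensorProduct.rid K C (c ⊗ₜ[K] 1) := by rw [Coalgebra.sum_tmul_counit_eq r]
    _ = c := by simp

lemma cunit_conv (m : A →ₗ[K] A →ₗ[K] A) (e : A) (he : ∀ x, m e x = x) (f : C →ₗ[K] A) :
    conv m (cunit e) f = f := by
  ext c
  rw [conv_apply m _ f (Coalgebra.Repr.arbitrary K c)]
  simp only [cunit_apply, map_smul, LinearMap.smul_apply, he, LinearMap.id_coe, id_eq]
  have h2 : ∀ w : C, (∑ i ∈ (Coalgebra.Repr.arbitrary K c).index,
      Coalgebra.counit (R := K) ((Coalgebra.Repr.arbitrary K c).left i) •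
        (Coalgebra.Repr.arbitrary K c).right i) = c := fun _ => sum_counit_smul_right _
  calc ∑ i ∈ (Coalgebra.Repr.arbitrary K c).index,
        Coalgebra.counit (R := K) ((Coalgebra.Repr.arbitrary K c).left i) •
          f ((Coalgebra.Repr.arbitrary K c).right i)
      = f (∑ i ∈ (Coalgebra.Repr.arbitrary K c).index,
          Coalgebra.counit (R := K) ((Coalgebra.Repr.arbitrary K c).left i) •
            (Coalgebra.Repr.arbitrary K c).right i) := by
        rw [map_sum]; simp
    _ = f c := by rw [sum_counit_smul_right]

lemma conv_cunit (m : A →ₗ[K] A →ₗ[K] A) (e : A) (he : ∀ x, m x e = x) (f : C →ₗ[K] A) :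
    conv m f (cunit e) = f := by
  ext c
  rw [conv_apply m f _ (Coalgebra.Repr.arbitrary K c)]
  simp only [cunit_apply, map_smul, he]
  calc ∑ i ∈ (Coalgebra.Repr.arbitrary K c).index,
        Coalgebra.counit (R := K) ((Coalgebra.Repr.arbitrary K c).right i) •
          f ((Coalgebra.Repr.arbitrary K c).left i)
      = f (∑ i ∈ (Coalgebra.Repr.arbitrary K c).index,
          Coalgebra.counit (R := K) ((Coalgebra.Repr.arbitrary K c).right i) •
            (Coalgebra.Repr.arbitrary K c).left i) := by
        rw [map_sum]; simp
    _ = f c := by rw [sum_counit_smul_left]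

lemma conv_assoc (m : A →ₗ[K] A →ₗ[K] A) (hassoc : ∀ x y z : A, m (m x y) z = m x (m y z))
    (f g h : C →ₗ[K] A) :
    conv m (conv m f g) h = conv m f (conv m g h) := by
  ext c
  have r := Coalgebra.Repr.arbitrary K c
  have key := Coalgebra.sum_tmul_tmul_eq r (fun i => Coalgebra.Repr.arbitrary K (r.left i))
    (fun i => Coalgebra.Repr.arbitrary K (r.right i))
  have key2 := congrArg
    (TensorProduct.lift (m.compl₂ (TensorProduct.lift m)) ∘ₗ
      TensorProduct.map f (TensorProduct.map g h)) key
  simp only [map_sum, LinearMap.comp_apply, TensorProduct.map_tmul, TensorProduct.lift.tmul,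
    LinearMap.compl₂_apply] at key2
  rw [conv_apply m _ h r, conv_apply m f _ r]
  calc ∑ i ∈ r.index, m (conv m f g (r.left i)) (h (r.right i))
      = ∑ i ∈ r.index, ∑ j ∈ (Coalgebra.Repr.arbitrary K (r.left i)).index,
          m (m (f ((Coalgebra.Repr.arbitrary K (r.left i)).left j))
              (g ((Coalgebra.Repr.arbitrary K (r.left i)).right j))) (h (r.right i)) := by
        refine Finset.sum_congr rfl fun i _ => ?_
        rw [conv_apply m f g (Coalgebra.Repr.arbitrary K (r.left i)), map_sum,
          LinearMap.sum_apply]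
    _ = ∑ i ∈ r.index, ∑ j ∈ (Coalgebra.Repr.arbitrary K (r.left i)).index,
          m (f ((Coalgebra.Repr.arbitrary K (r.left i)).left j))
            (m (g ((Coalgebra.Repr.arbitrary K (r.left i)).right j)) (h (r.right i))) := by
        simp_rw [hassoc]
    _ = ∑ i ∈ r.index, ∑ j ∈ (Coalgebra.Repr.arbitrary K (r.right i)).index,
          m (f (r.left i)) (m (g ((Coalgebra.Repr.arbitrary K (r.right i)).left j))
            (h ((Coalgebra.Repr.arbitrary K (r.right i)).right j))) := key2
    _ = ∑ i ∈ r.index, m (f (r.left i)) (conv m g h (r.right i)) := by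
        refine Finset.sum_congr rfl fun i _ => ?_
        rw [conv_apply m g h (Coalgebra.Repr.arbitrary K (r.right i)), map_sum]

lemma conv_unique (m : A →ₗ[K] A →ₗ[K] A) (hassoc : ∀ x y z : A, m (m x y) z = m x (m y z))
    (e : A) (hel : ∀ x, m e x = x) (her : ∀ x, m x e = x)
    {f g h : C →ₗ[K] A} (h1 : conv m f g = cunit e) (h2 : conv m h f = cunit e) : h = g := by
  have := conv_assoc (K := K) m hassoc h f g
  rw [h2, cunit_conv m e hel, h1, conv_cunit m e her] at this
  exact this.symm

end Conv
section HopfBasic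

lemma conv_add_left {C A : Type*} [AddCommMonoid C] [Module K C] [Coalgebra K C]
    [AddCommMonoid A] [Module K A] (m : A →ₗ[K] A →ₗ[K] A) (f f' g : C →ₗ[K] A) :
    conv m (f + f') g = conv m f g + conv m f' g := by
  unfold conv; rw [TensorProduct.map_add_left, LinearMap.add_comp, LinearMap.comp_add]

lemma conv_add_right {C A : Type*} [AddCommMonoid C] [Module K C] [Coalgebra K C]
    [AddCommMonoid A] [Module K A] (m : A →ₗ[K] A →ₗ[K] A) (f g g' : C →ₗ[K] A) :
    conv m f (g + g') = conv m f g + conv m f g' := by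
  unfold conv; rw [TensorProduct.map_add_right, LinearMap.add_comp, LinearMap.comp_add]

lemma conv_smul_left {C A : Type*} [AddCommMonoid C] [Module K C] [Coalgebra K C]
    [AddCommMonoid A] [Module K A] (m : A →ₗ[K] A →ₗ[K] A) (c : K) (f g : C →ₗ[K] A) :
    conv m (c • f) g = c • conv m f g := by
  unfold conv; rw [TensorProduct.map_smul_left, LinearMap.smul_comp, LinearMap.comp_smul]

lemma conv_smul_right {C A : Type*} [AddCommMonoid C] [Module K C] [Coalgebra K C]
    [AddCommMonoid A] [Module K A] (m : A →ₗ[K] A →ₗ[K] A) (c : K) (f g : C →ₗ[K] A) :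
    conv m f (c • g) = c • conv m f g := by
  unfold conv; rw [TensorProduct.map_smul_right, LinearMap.smul_comp, LinearMap.comp_smul]

/-- Convolution on `H →ₗ[K] H` as a bilinear map. -/
noncomputable def convBil : (H →ₗ[K] H) →ₗ[K] (H →ₗ[K] H) →ₗ[K] (H →ₗ[K] H) :=
  LinearMap.mk₂ K (conv (LinearMap.mul K H))
    (fun f f' g => conv_add_left _ f f' g)
    (fun c f g => conv_smul_left _ c f g)
    (fun f g g' => conv_add_right _ f g g')
    (fun c f g => conv_smul_right _ c f g)

@[simp] lemma convBil_apply (f g : H →ₗ[K] H) :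
    convBil (K := K) (H := H) f g = conv (LinearMap.mul K H) f g := rfl

/-- A representation of `comul (a * b)` from representations of `comul a`, `comul b`. -/
noncomputable def mulRepr {a b : H} {ι κ : Type*} (r : Coalgebra.Repr K a ι) (s : Coalgebra.Repr K b κ) :
    Coalgebra.Repr K (a * b) (ι × κ) where
  index := r.index ×ˢ s.index
  left p := r.left p.1 * s.left p.2
  right p := r.right p.1 * s.right p.2
  eq := by
    rw [Finset.sum_product]
    rw [Bialgebra.comul_mul, ← r.eq, ← s.eq, Finset.sum_mul_sum]
    simp [Algebra.TensorProduct.tmul_mul_tmul]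

lemma conv_antipode_id :
    conv (LinearMap.mul K H) (HopfAlgebra.antipode (R := K)) LinearMap.id
      = cunit (1 : H) := by
  ext a
  rw [conv_apply _ _ _ (Coalgebra.Repr.arbitrary K a)]
  simp only [LinearMap.mul_apply', LinearMap.id_coe, id_eq, cunit_apply]
  exact HopfAlgebra.sum_antipode_mul_eq_smul _

lemma conv_id_antipode :
    conv (LinearMap.mul K H) LinearMap.id (HopfAlgebra.antipode (R := K))
      = cunit (1 : H) := by
  ext a
  rw [conv_apply _ _ _ (Coalgebra.Repr.arbitrary K a)]
  simp only [LinearMap.mul_apply', LinearMap.id_coe, id_eq, cunit_apply]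
  exact HopfAlgebra.sum_mul_antipode_eq_smul _

lemma antipode_one' : HopfAlgebra.antipode (R := K) (1 : H) = 1 := by
  have h := HopfAlgebra.mul_antipode_rTensor_comul_apply (R := K) (a := (1 : H))
  rw [Bialgebra.comul_one] at h
  simpa [Algebra.TensorProduct.one_def] using h

/-- `a ↦ (b ↦ S b * S a)`. -/
noncomputable def Fmap : H →ₗ[K] H →ₗ[K] H where
  toFun a := ((LinearMap.mul K H).flip (HopfAlgebra.antipode (R := K) a)) ∘ₗ
    HopfAlgebra.antipode (R := K)
  map_add' a a' := by ext b; simp [mul_add]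
  map_smul' c a := by ext b; simp

@[simp] lemma Fmap_apply (a b : H) :
    Fmap (K := K) a b = HopfAlgebra.antipode (R := K) b * HopfAlgebra.antipode (R := K) a := rfl

/-- `a ↦ (b ↦ S (a * b))`. -/
noncomputable def Gmap : H →ₗ[K] H →ₗ[K] H where
  toFun a := HopfAlgebra.antipode (R := K) ∘ₗ LinearMap.mulLeft K a
  map_add' a a' := by ext b; simp [add_mul]
  map_smul' c a := by ext b; simp [smul_mul_assoc]

@[simp] lemma Gmap_apply (a b : H) :
    Gmap (K := K) a b = HopfAlgebra.antipode (R := K) (a * b) := rfl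

lemma conv_F_mul :
    conv (convBil (K := K) (H := H)) Fmap (LinearMap.mul K H)
      = cunit (cunit (1 : H)) := by
  ext a b
  rw [conv_apply _ _ _ (Coalgebra.Repr.arbitrary K a)]
  rw [LinearMap.sum_apply]
  have hterm : ∀ i ∈ (Coalgebra.Repr.arbitrary K a).index,
      (convBil (K := K) (Fmap ((Coalgebra.Repr.arbitrary K a).left i))
        (LinearMap.mul K H ((Coalgebra.Repr.arbitrary K a).right i))) b
      = ∑ j ∈ (Coalgebra.Repr.arbitrary K b).index,
          (HopfAlgebra.antipode (R := K) ((Coalgebra.Repr.arbitrary K b).left j) *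
            HopfAlgebra.antipode (R := K) ((Coalgebra.Repr.arbitrary K a).left i)) *
          ((Coalgebra.Repr.arbitrary K a).right i * (Coalgebra.Repr.arbitrary K b).right j) := by
    intro i _
    rw [convBil_apply, conv_apply _ _ _ (Coalgebra.Repr.arbitrary K b)]
    simp
  rw [Finset.sum_congr rfl hterm]
  rw [Finset.sum_comm]
  have hj : ∀ j ∈ (Coalgebra.Repr.arbitrary K b).index,
      ∑ i ∈ (Coalgebra.Repr.arbitrary K a).index,
        (HopfAlgebra.antipode (R := K) ((Coalgebra.Repr.arbitrary K b).left j) *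
          HopfAlgebra.antipode (R := K) ((Coalgebra.Repr.arbitrary K a).left i)) *
        ((Coalgebra.Repr.arbitrary K a).right i * (Coalgebra.Repr.arbitrary K b).right j)
      = Coalgebra.counit (R := K) a •
          (HopfAlgebra.antipode (R := K) ((Coalgebra.Repr.arbitrary K b).left j) *
            (Coalgebra.Repr.arbitrary K b).right j) := by
    intro j _
    have : ∀ i, (HopfAlgebra.antipode (R := K) ((Coalgebra.Repr.arbitrary K b).left j) *
          HopfAlgebra.antipode (R := K) ((Coalgebra.Repr.arbitrary K a).left i)) *
        ((Coalgebra.Repr.arbitrary K a).right i * (Coalgebra.Repr.arbitrary K b).right j)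
        = HopfAlgebra.antipode (R := K) ((Coalgebra.Repr.arbitrary K b).left j) *
          ((HopfAlgebra.antipode (R := K) ((Coalgebra.Repr.arbitrary K a).left i) *
            (Coalgebra.Repr.arbitrary K a).right i) * (Coalgebra.Repr.arbitrary K b).right j) := by
      intro i; simp only [mul_assoc]
    rw [Finset.sum_congr rfl (fun i _ => this i), ← Finset.mul_sum, ← Finset.sum_mul,
      HopfAlgebra.sum_antipode_mul_eq_smul (Coalgebra.Repr.arbitrary K a)]
    rw [smul_mul_assoc, one_mul, mul_smul_comm]
  rw [Finset.sum_congr rfl hj, ← Finset.smul_sum,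
    HopfAlgebra.sum_antipode_mul_eq_smul (Coalgebra.Repr.arbitrary K b)]
  simp [cunit_apply, smul_smul, mul_comm]

lemma conv_mul_G :
    conv (convBil (K := K) (H := H)) (LinearMap.mul K H) Gmap
      = cunit (cunit (1 : H)) := by
  ext a b
  rw [conv_apply _ _ _ (Coalgebra.Repr.arbitrary K a)]
  rw [LinearMap.sum_apply]
  have hterm : ∀ i ∈ (Coalgebra.Repr.arbitrary K a).index,
      (convBil (K := K) (LinearMap.mul K H ((Coalgebra.Repr.arbitrary K a).left i))
        (Gmap ((Coalgebra.Repr.arbitrary K a).right i))) b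
      = ∑ j ∈ (Coalgebra.Repr.arbitrary K b).index,
          ((Coalgebra.Repr.arbitrary K a).left i * (Coalgebra.Repr.arbitrary K b).left j) *
          HopfAlgebra.antipode (R := K)
            ((Coalgebra.Repr.arbitrary K a).right i * (Coalgebra.Repr.arbitrary K b).right j) := by
    intro i _
    rw [convBil_apply, conv_apply _ _ _ (Coalgebra.Repr.arbitrary K b)]
    simp
  rw [Finset.sum_congr rfl hterm]
  rw [← Finset.sum_product']
  have := HopfAlgebra.sum_mul_antipode_eq_smul
    (mulRepr (Coalgebra.Repr.arbitrary K a) (Coalgebra.Repr.arbitrary K b))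
  simp only [mulRepr] at this
  rw [this]
  simp [cunit_apply, Bialgebra.counit_mul, smul_smul, mul_comm]

lemma antipode_mul' (a b : H) :
    HopfAlgebra.antipode (R := K) (a * b)
      = HopfAlgebra.antipode (R := K) b * HopfAlgebra.antipode (R := K) a := by
  have hFG : Fmap (K := K) (H := H) = Gmap := by
    refine conv_unique (convBil (K := K) (H := H))
      (fun x y z => conv_assoc _ (fun p q r => mul_assoc p q r) x y z)
      (cunit 1) (fun x => cunit_conv _ 1 one_mul x) (fun x => conv_cunit _ 1 mul_one x)
      conv_mul_G conv_F_mul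
  have := congrFun (congrArg (fun (f : H →ₗ[K] H →ₗ[K] H) => (f a : H → H)) hFG) b
  simpa using this.symm

end HopfBasic
section AntiComul

/-- `Δ ∘ S`. -/
noncomputable def Phi1 : H →ₗ[K] H ⊗[K] H :=
  Coalgebra.comul ∘ₗ HopfAlgebra.antipode (R := K)

/-- `(S ⊗ S) ∘ swap ∘ Δ`. -/
noncomputable def Phi2 : H →ₗ[K] H ⊗[K] H :=
  TensorProduct.map (HopfAlgebra.antipode (R := K)) (HopfAlgebra.antipode (R := K)) ∘ₗ
    (TensorProduct.comm K H H).toLinearMap ∘ₗ Coalgebra.comul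

lemma conv_Phi1_comul :
    conv (LinearMap.mul K (H ⊗[K] H)) (Phi1 (K := K)) Coalgebra.comul
      = cunit (1 : H ⊗[K] H) := by
  ext a
  rw [conv_apply _ _ _ (Coalgebra.Repr.arbitrary K a)]
  simp only [LinearMap.mul_apply', Phi1, LinearMap.comp_apply]
  have : ∀ i, (Coalgebra.comul (R := K)
        (HopfAlgebra.antipode (R := K) ((Coalgebra.Repr.arbitrary K a).left i)) : H ⊗[K] H) *
        Coalgebra.comul ((Coalgebra.Repr.arbitrary K a).right i)
      = Coalgebra.comul (R := K) (HopfAlgebra.antipode (R := K)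
          ((Coalgebra.Repr.arbitrary K a).left i) * (Coalgebra.Repr.arbitrary K a).right i) := by
    intro i; rw [Bialgebra.comul_mul]
  rw [Finset.sum_congr rfl (fun i _ => this i), ← map_sum,
    HopfAlgebra.sum_antipode_mul_eq_smul (Coalgebra.Repr.arbitrary K a)]
  simp [cunit_apply]

/-- The collapsing map used in `conv_comul_Phi2`: `u ⊗ (v ⊗ w) ↦ (u * S q) ⊗ (v * S w)`. -/
noncomputable def Pq (q : H) : H ⊗[K] (H ⊗[K] H) →ₗ[K] H ⊗[K] H :=
  TensorProduct.map ((LinearMap.mul K H).flip (HopfAlgebra.antipode (R := K) q))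
    (TensorProduct.lift ((LinearMap.mul K H).compl₂ (HopfAlgebra.antipode (R := K))))

@[simp] lemma Pq_apply (q u v w : H) :
    Pq (K := K) q (u ⊗ₜ[K] (v ⊗ₜ[K] w))
      = (u * HopfAlgebra.antipode (R := K) q) ⊗ₜ[K] (v * HopfAlgebra.antipode (R := K) w) := by
  simp [Pq]

/-- The top-level map used in `conv_comul_Phi2`: `x ⊗ (y ⊗ z) ↦ Δ x * (S z ⊗ S y)`. -/
noncomputable def Ptop : H ⊗[K] (H ⊗[K] H) →ₗ[K] H ⊗[K] H :=
  TensorProduct.lift (((LinearMap.mul K (H ⊗[K] H)) ∘ₗ Coalgebra.comul).compl₂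
    (TensorProduct.map (HopfAlgebra.antipode (R := K)) (HopfAlgebra.antipode (R := K)) ∘ₗ
      (TensorProduct.comm K H H).toLinearMap))

@[simp] lemma Ptop_apply (x y z : H) :
    Ptop (K := K) (x ⊗ₜ[K] (y ⊗ₜ[K] z))
      = (Coalgebra.comul (R := K) x) *
          (HopfAlgebra.antipode (R := K) z ⊗ₜ[K] HopfAlgebra.antipode (R := K) y) := by
  simp [Ptop]

lemma conv_comul_Phi2 :
    conv (LinearMap.mul K (H ⊗[K] H)) Coalgebra.comul (Phi2 (K := K))
      = cunit (1 : H ⊗[K] H) := by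
  ext a
  set r := Coalgebra.Repr.arbitrary K a with hrdef
  set rL : ∀ i, Coalgebra.Repr K (r.left i) (H × H) :=
    fun i => Coalgebra.Repr.arbitrary K (r.left i) with hrL
  set rR : ∀ i, Coalgebra.Repr K (r.right i) (H × H) :=
    fun i => Coalgebra.Repr.arbitrary K (r.right i) with hrR
  rw [conv_apply _ _ _ r]
  -- Step 0: each term is `Ptop (left i ⊗ₜ comul (right i))`
  have h0 : ∀ i ∈ r.index,
      (LinearMap.mul K (H ⊗[K] H)) (Coalgebra.comul (r.left i)) (Phi2 (K := K) (r.right i))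
      = Ptop (K := K) (r.left i ⊗ₜ[K] (Coalgebra.comul (R := K) (r.right i))) := by
    intro i _
    simp only [Ptop, TensorProduct.lift.tmul, LinearMap.compl₂_apply, LinearMap.comp_apply,
      LinearMap.mul_apply', Phi2]
  rw [Finset.sum_congr rfl h0]
  -- Step 1: coassociativity exchange at the top level
  have key : ∑ i ∈ r.index, r.left i ⊗ₜ[K] (Coalgebra.comul (R := K) (r.right i))
      = ∑ i ∈ r.index, ∑ j ∈ (rL i).index,
          (rL i).left j ⊗ₜ[K] ((rL i).right j ⊗ₜ[K] r.right i) := by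
    have := Coalgebra.sum_tmul_tmul_eq r rL rR
    calc ∑ i ∈ r.index, r.left i ⊗ₜ[K] (Coalgebra.comul (R := K) (r.right i))
        = ∑ i ∈ r.index, ∑ j ∈ (rR i).index,
            r.left i ⊗ₜ[K] ((rR i).left j ⊗ₜ[K] (rR i).right j) := by
          refine Finset.sum_congr rfl fun i _ => ?_
          rw [← (rR i).eq, TensorProduct.tmul_sum]
      _ = ∑ i ∈ r.index, ∑ j ∈ (rL i).index,
            (rL i).left j ⊗ₜ[K] ((rL i).right j ⊗ₜ[K] r.right i) := this.symm
  have key2 := congrArg (Ptop (K := K)) key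
  simp only [map_sum] at key2
  rw [key2]
  simp only [map_sum, Ptop_apply]
  -- Step 2: for each i, collapse the inner double sum
  have h2 : ∀ i ∈ r.index,
      ∑ j ∈ (rL i).index, (Coalgebra.comul (R := K) ((rL i).left j)) *
        (HopfAlgebra.antipode (R := K) (r.right i) ⊗ₜ[K]
          HopfAlgebra.antipode (R := K) ((rL i).right j))
      = (r.left i * HopfAlgebra.antipode (R := K) (r.right i)) ⊗ₜ[K] (1 : H) := by
    intro i _
    set rLL : ∀ j, Coalgebra.Repr K ((rL i).left j) (H × H) :=
      fun j => Coalgebra.Repr.arbitrary K ((rL i).left j)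
    set rLR : ∀ j, Coalgebra.Repr K ((rL i).right j) (H × H) :=
      fun j => Coalgebra.Repr.arbitrary K ((rL i).right j)
    have hterm : ∀ j ∈ (rL i).index,
        (Coalgebra.comul (R := K) ((rL i).left j)) *
          (HopfAlgebra.antipode (R := K) (r.right i) ⊗ₜ[K]
            HopfAlgebra.antipode (R := K) ((rL i).right j))
        = ∑ k ∈ (rLL j).index, Pq (K := K) (r.right i)
            ((rLL j).left k ⊗ₜ[K] ((rLL j).right k ⊗ₜ[K] (rL i).right j)) := by
      intro j _
      rw [← (rLL j).eq, Finset.sum_mul]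
      refine Finset.sum_congr rfl fun k _ => ?_
      rw [Pq_apply, Algebra.TensorProduct.tmul_mul_tmul]
    rw [Finset.sum_congr rfl hterm]
    have hex := Coalgebra.sum_tmul_tmul_eq (rL i) rLL rLR
    have hex2 := congrArg (Pq (K := K) (r.right i)) hex
    simp only [map_sum] at hex2
    rw [hex2]
    have hcol : ∀ j ∈ (rL i).index,
        ∑ k ∈ (rLR j).index, Pq (K := K) (r.right i)
          ((rL i).left j ⊗ₜ[K] ((rLR j).left k ⊗ₜ[K] (rLR j).right k))
        = Coalgebra.counit (R := K) ((rL i).right j) •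
            (((rL i).left j * HopfAlgebra.antipode (R := K) (r.right i)) ⊗ₜ[K] (1 : H)) := by
      intro j _
      simp only [Pq_apply]
      rw [← TensorProduct.tmul_sum, HopfAlgebra.sum_mul_antipode_eq_smul (rLR j)]
      rw [TensorProduct.tmul_smul]
    rw [Finset.sum_congr rfl hcol]
    calc ∑ j ∈ (rL i).index, Coalgebra.counit (R := K) ((rL i).right j) •
          (((rL i).left j * HopfAlgebra.antipode (R := K) (r.right i)) ⊗ₜ[K] (1 : H))
        = (∑ j ∈ (rL i).index, Coalgebra.counit (R := K) ((rL i).right j) •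
            ((rL i).left j * HopfAlgebra.antipode (R := K) (r.right i))) ⊗ₜ[K] (1 : H) := by
          rw [TensorProduct.sum_tmul]
          exact Finset.sum_congr rfl fun j _ => by rw [TensorProduct.smul_tmul']
      _ = ((∑ j ∈ (rL i).index, Coalgebra.counit (R := K) ((rL i).right j) •
            (rL i).left j) * HopfAlgebra.antipode (R := K) (r.right i)) ⊗ₜ[K] (1 : H) := by
          rw [Finset.sum_mul]
          congr 1
          exact Finset.sum_congr rfl fun j _ => by rw [smul_mul_assoc]
      _ = (r.left i * HopfAlgebra.antipode (R := K) (r.right i)) ⊗ₜ[K] (1 : H) := by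
          rw [sum_counit_smul_left (rL i)]
  rw [Finset.sum_congr rfl h2]
  rw [← TensorProduct.sum_tmul, HopfAlgebra.sum_mul_antipode_eq_smul r]
  rw [← TensorProduct.smul_tmul']
  simp [cunit_apply, Algebra.TensorProduct.one_def]

end AntiComul
lemma comul_antipode : Phi1 (K := K) (H := H) = Phi2 := by
  refine conv_unique (LinearMap.mul K (H ⊗[K] H))
    (fun x y z => mul_assoc x y z) (1 : H ⊗[K] H) one_mul mul_one
    conv_comul_Phi2 conv_Phi1_comul

/-- A representation of `comul (S a)` from a representation of `comul a`. -/
noncomputable def SRepr {a : H} {ι : Type*} (r : Coalgebra.Repr K a ι) :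
    Coalgebra.Repr K (HopfAlgebra.antipode (R := K) a) ι where
  index := r.index
  left i := HopfAlgebra.antipode (R := K) (r.right i)
  right i := HopfAlgebra.antipode (R := K) (r.left i)
  eq := by
    have h := congrArg (fun f : H →ₗ[K] H ⊗[K] H => f a) (comul_antipode (K := K) (H := H))
    simp only [Phi1, Phi2, LinearMap.comp_apply, LinearEquiv.coe_coe] at h
    rw [h, ← r.eq]
    rw [map_sum, map_sum]
    simp

section Tinv

variable (hγ : Function.Bijective (HopfAlgebra.antipode (R := K) (A := H)))

/-- The inverse of the antipode. -/
noncomputable def Tinv : H →ₗ[K] H :=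
  ((LinearEquiv.ofBijective (HopfAlgebra.antipode (R := K)) hγ).symm : H →ₗ[K] H)

lemma Tinv_S (x : H) : Tinv (K := K) hγ (HopfAlgebra.antipode (R := K) x) = x :=
  (LinearEquiv.ofBijective (HopfAlgebra.antipode (R := K)) hγ).symm_apply_apply x

lemma S_Tinv (x : H) : HopfAlgebra.antipode (R := K) (Tinv (K := K) hγ x) = x :=
  (LinearEquiv.ofBijective (HopfAlgebra.antipode (R := K)) hγ).apply_symm_apply x

/-- A representation of `comul (T a)` from a representation of `comul a`. -/
noncomputable def TRepr {a : H} {ι : Type*} (r : Coalgebra.Repr K a ι) :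
    Coalgebra.Repr K (Tinv (K := K) hγ a) ι where
  index := r.index
  left i := Tinv (K := K) hγ (r.right i)
  right i := Tinv (K := K) hγ (r.left i)
  eq := by
    have hinj : Function.Injective
        (TensorProduct.map (HopfAlgebra.antipode (R := K) (A := H))
          (HopfAlgebra.antipode (R := K) (A := H))) := by
      have hcomp : TensorProduct.map (Tinv (K := K) hγ) (Tinv (K := K) hγ) ∘ₗ
          TensorProduct.map (HopfAlgebra.antipode (R := K) (A := H))
            (HopfAlgebra.antipode (R := K)) = LinearMap.id := by
        rw [← TensorProduct.map_comp]
        have h1 : Tinv (K := K) hγ ∘ₗ HopfAlgebra.antipode (R := K) (A := H)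
            = LinearMap.id := by ext x; simp [Tinv_S]
        rw [h1, TensorProduct.map_id]
      intro u v huv
      have := congrArg (TensorProduct.map (Tinv (K := K) hγ) (Tinv (K := K) hγ)) huv
      rwa [← LinearMap.comp_apply, ← LinearMap.comp_apply, hcomp, LinearMap.id_apply,
        LinearMap.id_apply] at this
    have hcomm : Function.Injective
        ((TensorProduct.comm K H H : H ⊗[K] H ≃ₗ[K] H ⊗[K] H)) :=
      (TensorProduct.comm K H H).injective
    have h := congrArg (fun f : H →ₗ[K] H ⊗[K] H => f (Tinv (K := K) hγ a))
      (comul_antipode (K := K) (H := H))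
    simp only [Phi1, Phi2, LinearMap.comp_apply, LinearEquiv.coe_coe, S_Tinv] at h
    apply hcomm
    apply hinj
    rw [← h, ← r.eq, map_sum, map_sum]
    simp [S_Tinv]

lemma sum_Tinv_right_mul_left {a : H} {ι : Type*} (r : Coalgebra.Repr K a ι) :
    ∑ i ∈ r.index, Tinv (K := K) hγ (r.right i) * r.left i
      = Coalgebra.counit (R := K) a • 1 := by
  apply hγ.injective
  rw [map_sum]
  have : ∀ i ∈ r.index, HopfAlgebra.antipode (R := K) (Tinv (K := K) hγ (r.right i) * r.left i)
      = HopfAlgebra.antipode (R := K) (r.left i) * r.right i := by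
    intro i _
    rw [antipode_mul', S_Tinv]
  rw [Finset.sum_congr rfl this, HopfAlgebra.sum_antipode_mul_eq_smul r]
  rw [map_smul, antipode_one']

lemma sum_right_mul_Tinv_left {a : H} {ι : Type*} (r : Coalgebra.Repr K a ι) :
    ∑ i ∈ r.index, r.right i * Tinv (K := K) hγ (r.left i)
      = Coalgebra.counit (R := K) a • 1 := by
  apply hγ.injective
  rw [map_sum]
  have : ∀ i ∈ r.index, HopfAlgebra.antipode (R := K) (r.right i * Tinv (K := K) hγ (r.left i))
      = r.left i * HopfAlgebra.antipode (R := K) (r.right i) := by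
    intro i _
    rw [antipode_mul', S_Tinv]
  rw [Finset.sum_congr rfl this, HopfAlgebra.sum_mul_antipode_eq_smul r]
  rw [map_smul, antipode_one']

end Tinv
section TauSigma

lemma σ_tmul (x y : H) : σ (K := K) (x ⊗ₜ[K] y) = y ⊗ₜ[K] x := rfl

lemma τ_tmul {a : H} {ι : Type*} (r : Coalgebra.Repr K a ι) (b : H) :
    τ (K := K) (a ⊗ₜ[K] b) = ∑ i ∈ r.index, (r.right i * b) ⊗ₜ[K] r.left i := by
  simp only [τ, σ, LinearMap.comp_apply, LinearEquiv.coe_coe, LinearMap.rTensor_tmul,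
    LinearMap.id_coe, id_eq]
  rw [← r.eq, TensorProduct.sum_tmul, map_sum, map_sum, map_sum]
  refine Finset.sum_congr rfl fun i _ => ?_
  simp

/-- The inverse of `τ`: `x ⊗ y ↦ ∑ y₁ ⊗ S(y₂) x`. -/
noncomputable def τinv : H ⊗[K] H →ₗ[K] H ⊗[K] H :=
  LinearMap.lTensor H (LinearMap.mul' K H ∘ₗ
      LinearMap.rTensor H (HopfAlgebra.antipode (R := K))) ∘ₗ
    (TensorProduct.assoc K H H H).toLinearMap ∘ₗ
      LinearMap.rTensor H (Coalgebra.comul (R := K) (A := H)) ∘ₗ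
        (TensorProduct.comm K H H).toLinearMap

lemma τinv_tmul {b : H} {ι : Type*} (r : Coalgebra.Repr K b ι) (a : H) :
    τinv (K := K) (a ⊗ₜ[K] b)
      = ∑ i ∈ r.index, r.left i ⊗ₜ[K] (HopfAlgebra.antipode (R := K) (r.right i) * a) := by
  simp only [τinv, LinearMap.comp_apply, LinearEquiv.coe_coe, TensorProduct.comm_tmul,
    LinearMap.rTensor_tmul]
  rw [← r.eq, TensorProduct.sum_tmul, map_sum, map_sum]
  refine Finset.sum_congr rfl fun i _ => ?_
  simp

lemma τ_comp_τinv : τ (K := K) (H := H) ∘ₗ τinv = LinearMap.id := by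
  apply TensorProduct.ext'
  intro x y
  simp only [LinearMap.comp_apply, LinearMap.id_apply]
  set r := Coalgebra.Repr.arbitrary K y with hr
  set rL : ∀ i, Coalgebra.Repr K (r.left i) (H × H) :=
    fun i => Coalgebra.Repr.arbitrary K (r.left i) with hrL
  set rR : ∀ i, Coalgebra.Repr K (r.right i) (H × H) :=
    fun i => Coalgebra.Repr.arbitrary K (r.right i) with hrR
  rw [τinv_tmul r x, map_sum]
  have hterm : ∀ i ∈ r.index,
      τ (K := K) (r.left i ⊗ₜ[K] (HopfAlgebra.antipode (R := K) (r.right i) * x))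
      = ∑ j ∈ (rL i).index,
          ((rL i).right j * (HopfAlgebra.antipode (R := K) (r.right i) * x)) ⊗ₜ[K]
            (rL i).left j := fun i _ => τ_tmul (rL i) _
  rw [Finset.sum_congr rfl hterm]
  -- collapse via coassociativity
  set Gx : H ⊗[K] (H ⊗[K] H) →ₗ[K] H ⊗[K] H :=
    LinearMap.rTensor H (TensorProduct.lift ((LinearMap.mul K H).compl₂
      (((LinearMap.mul K H).flip x) ∘ₗ HopfAlgebra.antipode (R := K)))) ∘ₗ
      (TensorProduct.comm K H (H ⊗[K] H)).toLinearMap with hGx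
  have hGx_apply : ∀ u v w : H, Gx (u ⊗ₜ[K] (v ⊗ₜ[K] w))
      = (v * (HopfAlgebra.antipode (R := K) w * x)) ⊗ₜ[K] u := by
    intro u v w; simp [hGx]
  have hex := congrArg Gx (Coalgebra.sum_tmul_tmul_eq r rL rR)
  simp only [map_sum, hGx_apply] at hex
  rw [hex]
  have hcol : ∀ i ∈ r.index,
      ∑ j ∈ (rR i).index,
        ((rR i).left j * (HopfAlgebra.antipode (R := K) ((rR i).right j) * x)) ⊗ₜ[K] r.left i
      = Coalgebra.counit (R := K) (r.right i) • (x ⊗ₜ[K] r.left i) := by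
    intro i _
    rw [← TensorProduct.sum_tmul]
    have : ∑ j ∈ (rR i).index,
        (rR i).left j * (HopfAlgebra.antipode (R := K) ((rR i).right j) * x)
        = Coalgebra.counit (R := K) (r.right i) • x := by
      rw [← Finset.sum_congr rfl (fun j _ => mul_assoc ((rR i).left j) _ x),
        ← Finset.sum_mul, HopfAlgebra.sum_mul_antipode_eq_smul (rR i), smul_mul_assoc, one_mul]
    rw [this, TensorProduct.smul_tmul']
  rw [Finset.sum_congr rfl hcol]
  calc ∑ i ∈ r.index, Coalgebra.counit (R := K) (r.right i) • (x ⊗ₜ[K] r.left i)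
      = x ⊗ₜ[K] (∑ i ∈ r.index, Coalgebra.counit (R := K) (r.right i) • r.left i) := by
        rw [TensorProduct.tmul_sum]
        exact Finset.sum_congr rfl fun i _ => by rw [TensorProduct.tmul_smul]
    _ = x ⊗ₜ[K] y := by rw [sum_counit_smul_left r]

lemma τinv_comp_τ : τinv (K := K) (H := H) ∘ₗ τ = LinearMap.id := by
  apply TensorProduct.ext'
  intro x y
  simp only [LinearMap.comp_apply, LinearMap.id_apply]
  set r := Coalgebra.Repr.arbitrary K x with hr
  set rL : ∀ i, Coalgebra.Repr K (r.left i) (H × H) :=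
    fun i => Coalgebra.Repr.arbitrary K (r.left i) with hrL
  set rR : ∀ i, Coalgebra.Repr K (r.right i) (H × H) :=
    fun i => Coalgebra.Repr.arbitrary K (r.right i) with hrR
  rw [τ_tmul r y, map_sum]
  have hterm : ∀ i ∈ r.index,
      τinv (K := K) ((r.right i * y) ⊗ₜ[K] r.left i)
      = ∑ j ∈ (rL i).index, (rL i).left j ⊗ₜ[K]
          (HopfAlgebra.antipode (R := K) ((rL i).right j) * (r.right i * y)) :=
    fun i _ => τinv_tmul (rL i) _
  rw [Finset.sum_congr rfl hterm]
  set Gy : H ⊗[K] (H ⊗[K] H) →ₗ[K] H ⊗[K] H :=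
    LinearMap.lTensor H (TensorProduct.lift
      (((LinearMap.mul K H) ∘ₗ HopfAlgebra.antipode (R := K)).compl₂
        ((LinearMap.mul K H).flip y))) with hGy
  have hGy_apply : ∀ u v w : H, Gy (u ⊗ₜ[K] (v ⊗ₜ[K] w))
      = u ⊗ₜ[K] (HopfAlgebra.antipode (R := K) v * (w * y)) := by
    intro u v w; simp [hGy]
  have hex := congrArg Gy (Coalgebra.sum_tmul_tmul_eq r rL rR)
  simp only [map_sum, hGy_apply] at hex
  rw [hex]
  have hcol : ∀ i ∈ r.index,
      ∑ j ∈ (rR i).index, r.left i ⊗ₜ[K]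
        (HopfAlgebra.antipode (R := K) ((rR i).left j) * ((rR i).right j * y))
      = Coalgebra.counit (R := K) (r.right i) • (r.left i ⊗ₜ[K] y) := by
    intro i _
    rw [← TensorProduct.tmul_sum]
    have : ∑ j ∈ (rR i).index,
        HopfAlgebra.antipode (R := K) ((rR i).left j) * ((rR i).right j * y)
        = Coalgebra.counit (R := K) (r.right i) • y := by
      rw [← Finset.sum_congr rfl (fun j _ => mul_assoc _ ((rR i).right j) y),
        ← Finset.sum_mul, HopfAlgebra.sum_antipode_mul_eq_smul (rR i), smul_mul_assoc, one_mul]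
    rw [this, TensorProduct.tmul_smul]
  rw [Finset.sum_congr rfl hcol]
  calc ∑ i ∈ r.index, Coalgebra.counit (R := K) (r.right i) • (r.left i ⊗ₜ[K] y)
      = (∑ i ∈ r.index, Coalgebra.counit (R := K) (r.right i) • r.left i) ⊗ₜ[K] y := by
        rw [TensorProduct.sum_tmul]
        exact Finset.sum_congr rfl fun i _ => by rw [TensorProduct.smul_tmul']
    _ = x ⊗ₜ[K] y := by rw [sum_counit_smul_left r]

end TauSigma
section Equations

lemma L1_apply (f : H ⊗[K] H →ₗ[K] H ⊗[K] H) (w : H ⊗[K] H) (c : H) :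
    L1 (K := K) f (w ⊗ₜ[K] c) = f w ⊗ₜ[K] c := rfl

lemma L2_apply (f : H ⊗[K] H →ₗ[K] H ⊗[K] H) (a b c : H) :
    L2 (K := K) f ((a ⊗ₜ[K] b) ⊗ₜ[K] c)
      = (TensorProduct.assoc K H H H).symm (a ⊗ₜ[K] f (b ⊗ₜ[K] c)) := by
  simp [L2]

lemma eq_one :
    L1 (τ (K := K) (H := H)) ∘ₗ L2 (σ (K := K)) ∘ₗ L1 (σ (K := K)) =
      L2 (σ (K := K)) ∘ₗ L1 (σ (K := K)) ∘ₗ L2 (τ (K := K)) := by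
  apply TensorProduct.ext_threefold
  intro a b c
  set r := Coalgebra.Repr.arbitrary K b with hr
  have lhs : (L1 (τ (K := K) (H := H)) ∘ₗ L2 (σ (K := K)) ∘ₗ L1 (σ (K := K)))
      ((a ⊗ₜ[K] b) ⊗ₜ[K] c)
      = ∑ j ∈ r.index, ((r.right j * c) ⊗ₜ[K] r.left j) ⊗ₜ[K] a := by
    rw [LinearMap.comp_apply, LinearMap.comp_apply, L1_apply, σ_tmul, L2_apply, σ_tmul,
      TensorProduct.assoc_symm_tmul, L1_apply, τ_tmul r c, TensorProduct.sum_tmul]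
  have rhs : (L2 (σ (K := K)) ∘ₗ L1 (σ (K := K)) ∘ₗ L2 (τ (K := K)))
      ((a ⊗ₜ[K] b) ⊗ₜ[K] c)
      = ∑ j ∈ r.index, ((r.right j * c) ⊗ₜ[K] r.left j) ⊗ₜ[K] a := by
    rw [LinearMap.comp_apply, LinearMap.comp_apply, L2_apply, τ_tmul r c,
      TensorProduct.tmul_sum, map_sum, map_sum, map_sum]
    refine Finset.sum_congr rfl fun j _ => ?_
    rw [TensorProduct.assoc_symm_tmul, L1_apply, σ_tmul, L2_apply, σ_tmul,
      TensorProduct.assoc_symm_tmul]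
  rw [lhs, rhs]

lemma eq_two :
    L1 (τ (K := K) (H := H)) ∘ₗ L2 (σ (K := K)) ∘ₗ L1 (τ (K := K)) =
      L2 (τ (K := K)) ∘ₗ L1 (τ (K := K)) ∘ₗ L2 (τ (K := K)) := by
  apply TensorProduct.ext_threefold
  intro a b c
  set r := Coalgebra.Repr.arbitrary K a with hra
  set rb := Coalgebra.Repr.arbitrary K b with hrb
  set rL : ∀ i, Coalgebra.Repr K (r.left i) (H × H) :=
    fun i => Coalgebra.Repr.arbitrary K (r.left i) with hrL
  set rR : ∀ i, Coalgebra.Repr K (r.right i) (H × H) :=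
    fun i => Coalgebra.Repr.arbitrary K (r.right i) with hrR
  have lhs : (L1 (τ (K := K) (H := H)) ∘ₗ L2 (σ (K := K)) ∘ₗ L1 (τ (K := K)))
      ((a ⊗ₜ[K] b) ⊗ₜ[K] c)
      = ∑ i ∈ r.index, ∑ p ∈ (rR i).index ×ˢ rb.index,
          ((((rR i).right p.1 * rb.right p.2) * c) ⊗ₜ[K]
            ((rR i).left p.1 * rb.left p.2)) ⊗ₜ[K] r.left i := by
    rw [LinearMap.comp_apply, LinearMap.comp_apply, L1_apply, τ_tmul r b,
      TensorProduct.sum_tmul, map_sum, map_sum]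
    refine Finset.sum_congr rfl fun i _ => ?_
    rw [L2_apply, σ_tmul, TensorProduct.assoc_symm_tmul, L1_apply,
      τ_tmul (mulRepr (rR i) rb) c, TensorProduct.sum_tmul]
    rfl
  have rhs : (L2 (τ (K := K)) ∘ₗ L1 (τ (K := K)) ∘ₗ L2 (τ (K := K)))
      ((a ⊗ₜ[K] b) ⊗ₜ[K] c)
      = ∑ k ∈ rb.index, ∑ i ∈ r.index, ∑ j ∈ (rL i).index,
          ((r.right i * (rb.right k * c)) ⊗ₜ[K] ((rL i).right j * rb.left k)) ⊗ₜ[K]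
            (rL i).left j := by
    rw [LinearMap.comp_apply, LinearMap.comp_apply, L2_apply, τ_tmul rb c,
      TensorProduct.tmul_sum, map_sum, map_sum, map_sum]
    refine Finset.sum_congr rfl fun k _ => ?_
    rw [TensorProduct.assoc_symm_tmul, L1_apply, τ_tmul r (rb.right k * c),
      TensorProduct.sum_tmul, map_sum]
    refine Finset.sum_congr rfl fun i _ => ?_
    rw [L2_apply, τ_tmul (rL i) (rb.left k), TensorProduct.tmul_sum, map_sum]
    refine Finset.sum_congr rfl fun j _ => ?_
    rw [TensorProduct.assoc_symm_tmul]
  rw [lhs, rhs]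
  -- exchange groupings via coassociativity
  have base := Coalgebra.sum_tmul_tmul_eq r rL rR
  have key : ∀ k ∈ rb.index,
      ∑ i ∈ r.index, ∑ j ∈ (rL i).index,
        ((r.right i * (rb.right k * c)) ⊗ₜ[K] ((rL i).right j * rb.left k)) ⊗ₜ[K]
          (rL i).left j
      = ∑ i ∈ r.index, ∑ j ∈ (rR i).index,
          ((((rR i).right j * rb.right k) * c) ⊗ₜ[K] ((rR i).left j * rb.left k)) ⊗ₜ[K]
            r.left i := by
    intro k _
    set Fk : H ⊗[K] (H ⊗[K] H) →ₗ[K] (H ⊗[K] H) ⊗[K] H :=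
      LinearMap.rTensor H
        (TensorProduct.map ((LinearMap.mul K H).flip (rb.right k * c))
            ((LinearMap.mul K H).flip (rb.left k)) ∘ₗ
          (TensorProduct.comm K H H).toLinearMap) ∘ₗ
        (TensorProduct.comm K H (H ⊗[K] H)).toLinearMap with hFk
    have hFk_apply : ∀ u v w : H, Fk (u ⊗ₜ[K] (v ⊗ₜ[K] w))
        = ((w * (rb.right k * c)) ⊗ₜ[K] (v * rb.left k)) ⊗ₜ[K] u := by
      intro u v w; simp [hFk]
    have h2 := congrArg Fk base
    simp only [map_sum, hFk_apply] at h2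
    calc ∑ i ∈ r.index, ∑ j ∈ (rL i).index,
          ((r.right i * (rb.right k * c)) ⊗ₜ[K] ((rL i).right j * rb.left k)) ⊗ₜ[K]
            (rL i).left j
        = ∑ i ∈ r.index, ∑ j ∈ (rR i).index,
            (((rR i).right j * (rb.right k * c)) ⊗ₜ[K] ((rR i).left j * rb.left k)) ⊗ₜ[K]
              r.left i := h2
      _ = ∑ i ∈ r.index, ∑ j ∈ (rR i).index,
            ((((rR i).right j * rb.right k) * c) ⊗ₜ[K] ((rR i).left j * rb.left k)) ⊗ₜ[K]
              r.left i := by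
          refine Finset.sum_congr rfl fun i _ => Finset.sum_congr rfl fun j _ => ?_
          rw [mul_assoc]
  rw [Finset.sum_congr rfl key, Finset.sum_comm]
  refine Finset.sum_congr rfl fun i _ => ?_
  rw [Finset.sum_product]
  exact Finset.sum_comm
end Equations
section RpTau

/-- Collapse `g ⊗ id : H ⊗ H → H`. -/
noncomputable def gcol (g : Module.Dual K H) : H ⊗[K] H →ₗ[K] H :=
  (TensorProduct.lid K H).toLinearMap ∘ₗ LinearMap.rTensor H g

@[simp] lemma gcol_tmul (g : Module.Dual K H) (x v : H) :
    gcol (K := K) g (x ⊗ₜ[K] v) = g x • v := by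
  simp [gcol]

lemma inner_collapse (g : Module.Dual K H) (w : H ⊗[K] H) :
    (TensorProduct.lid K H)
      (LinearMap.rTensor H (contractLeft K H)
        ((TensorProduct.assoc K (Module.Dual K H) H H).symm (g ⊗ₜ[K] w)))
      = gcol (K := K) g w := by
  induction w with
  | zero => simp
  | tmul x v => simp
  | add w₁ w₂ h₁ h₂ => rw [TensorProduct.tmul_add, map_add, map_add, map_add, map_add, h₁, h₂]

lemma rp_apply (f : H ⊗[K] H →ₗ[K] H ⊗[K] H) (g : Module.Dual K H) (u : H) :
    rp (K := K) f (g ⊗ₜ[K] u)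
      = ∑ i : Module.Basis.ofVectorSpaceIndex K H,
          gcol (K := K) g (f (u ⊗ₜ[K] Module.Basis.ofVectorSpace K H i)) ⊗ₜ[K]
            (Module.Basis.ofVectorSpace K H).coord i := by
  simp only [rp, LinearMap.comp_apply, LinearEquiv.coe_coe, TensorProduct.rid_symm_apply,
    LinearMap.lTensor_tmul, coevaluation_apply_one]
  rw [TensorProduct.tmul_sum, map_sum, map_sum]
  refine Finset.sum_congr rfl fun i _ => ?_
  rw [TensorProduct.assoc_symm_tmul, LinearMap.rTensor_tmul]
  congr 1
  simp only [LinearMap.comp_apply, LinearEquiv.coe_coe, TensorProduct.assoc_tmul,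
    LinearMap.lTensor_tmul]
  exact inner_collapse g _

lemma dual_basis_sum (h : Module.Dual K H) :
    ∑ i : Module.Basis.ofVectorSpaceIndex K H,
      h (Module.Basis.ofVectorSpace K H i) • (Module.Basis.ofVectorSpace K H).coord i = h := by
  ext x
  simp only [LinearMap.sum_apply, LinearMap.smul_apply, Module.Basis.coord_apply, smul_eq_mul]
  calc ∑ i : Module.Basis.ofVectorSpaceIndex K H,
        h (Module.Basis.ofVectorSpace K H i) * (Module.Basis.ofVectorSpace K H).repr x i
      = h (∑ i : Module.Basis.ofVectorSpaceIndex K H,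
          (Module.Basis.ofVectorSpace K H).repr x i • Module.Basis.ofVectorSpace K H i) := by
        rw [map_sum]
        exact Finset.sum_congr rfl fun i _ => by rw [map_smul, smul_eq_mul, mul_comm]
    _ = h x := by rw [Module.Basis.sum_repr]

/-- `h ⊗ g ↦ g ∘ (left multiplication by h)` as a bilinear map. -/
noncomputable def mhat : H →ₗ[K] Module.Dual K H →ₗ[K] Module.Dual K H :=
  LinearMap.mk₂ K (fun h g => g ∘ₗ LinearMap.mulLeft K h)
    (fun h h' g => by ext x; simp [add_mul])
    (fun c h g => by ext x; simp [smul_mul_assoc])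
    (fun h g g' => by ext x; simp)
    (fun c h g => by ext x; simp)

@[simp] lemma mhat_apply (h : H) (g : Module.Dual K H) (x : H) :
    mhat (K := K) h g x = g (h * x) := rfl

lemma rp_τ_tmul (g : Module.Dual K H) {u : H} {ι : Type*} (r : Coalgebra.Repr K u ι) :
    rp (K := K) (τ (K := K) (H := H)) (g ⊗ₜ[K] u)
      = ∑ j ∈ r.index, r.left j ⊗ₜ[K] (g ∘ₗ LinearMap.mulLeft K (r.right j)) := by
  rw [rp_apply]
  have h1 : ∀ i, gcol (K := K) g (τ (K := K) (u ⊗ₜ[K] Module.Basis.ofVectorSpace K H i))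
      = ∑ j ∈ r.index, g (r.right j * Module.Basis.ofVectorSpace K H i) • r.left j := by
    intro i
    rw [τ_tmul r, map_sum]
    exact Finset.sum_congr rfl fun j _ => by simp
  calc ∑ i : Module.Basis.ofVectorSpaceIndex K H,
        gcol (K := K) g (τ (K := K) (u ⊗ₜ[K] Module.Basis.ofVectorSpace K H i)) ⊗ₜ[K]
          (Module.Basis.ofVectorSpace K H).coord i
      = ∑ i : Module.Basis.ofVectorSpaceIndex K H, ∑ j ∈ r.index,
          r.left j ⊗ₜ[K] (g (r.right j * Module.Basis.ofVectorSpace K H i) •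
            (Module.Basis.ofVectorSpace K H).coord i) := by
        refine Finset.sum_congr rfl fun i _ => ?_
        rw [h1 i, TensorProduct.sum_tmul]
        refine Finset.sum_congr rfl fun j _ => ?_
        rw [TensorProduct.smul_tmul, TensorProduct.tmul_smul]
    _ = ∑ j ∈ r.index, r.left j ⊗ₜ[K] (∑ i : Module.Basis.ofVectorSpaceIndex K H,
          g (r.right j * Module.Basis.ofVectorSpace K H i) • (Module.Basis.ofVectorSpace K H).coord i) := by
        rw [Finset.sum_comm]
        refine Finset.sum_congr rfl fun j _ => ?_
        rw [TensorProduct.tmul_sum]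
    _ = ∑ j ∈ r.index, r.left j ⊗ₜ[K] (g ∘ₗ LinearMap.mulLeft K (r.right j)) := by
        refine Finset.sum_congr rfl fun j _ => ?_
        congr 1
        have := dual_basis_sum (K := K) (H := H) (g ∘ₗ LinearMap.mulLeft K (r.right j))
        simpa using this

variable (hγ : Function.Bijective (HopfAlgebra.antipode (R := K) (A := H)))

/-- The inverse of `rp τ`. -/
noncomputable def rpτinv : H ⊗[K] Module.Dual K H →ₗ[K] Module.Dual K H ⊗[K] H :=
  (TensorProduct.comm K H (Module.Dual K H)).toLinearMap ∘ₗ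
    LinearMap.lTensor H (TensorProduct.lift (mhat ∘ₗ Tinv (K := K) hγ)) ∘ₗ
      (TensorProduct.assoc K H H (Module.Dual K H)).toLinearMap ∘ₗ
        LinearMap.rTensor (Module.Dual K H) (Coalgebra.comul (R := K) (A := H))

lemma rpτinv_tmul {u : H} {ι : Type*} (r : Coalgebra.Repr K u ι) (g : Module.Dual K H) :
    rpτinv (K := K) hγ (u ⊗ₜ[K] g)
      = ∑ j ∈ r.index,
          (g ∘ₗ LinearMap.mulLeft K (Tinv (K := K) hγ (r.right j))) ⊗ₜ[K] r.left j := by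
  simp only [rpτinv, LinearMap.comp_apply, LinearEquiv.coe_coe, LinearMap.rTensor_tmul]
  rw [← r.eq, TensorProduct.sum_tmul, map_sum, map_sum, map_sum]
  refine Finset.sum_congr rfl fun j _ => ?_
  simp only [TensorProduct.assoc_tmul, LinearMap.lTensor_tmul, TensorProduct.lift.tmul,
    LinearMap.comp_apply, TensorProduct.comm_tmul]
  rfl

lemma comp_mulLeft (g : Module.Dual K H) (a b : H) :
    (g ∘ₗ LinearMap.mulLeft K a) ∘ₗ LinearMap.mulLeft K b
      = g ∘ₗ LinearMap.mulLeft K (a * b) := by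
  rw [LinearMap.mulLeft_mul, LinearMap.comp_assoc]

lemma rpτinv_comp_rpτ :
    rpτinv (K := K) (H := H) hγ ∘ₗ rp (K := K) (τ (K := K) (H := H)) = LinearMap.id := by
  apply TensorProduct.ext'
  intro g u
  simp only [LinearMap.comp_apply, LinearMap.id_apply]
  set r := Coalgebra.Repr.arbitrary K u with hru
  set rL : ∀ i, Coalgebra.Repr K (r.left i) (H × H) :=
    fun i => Coalgebra.Repr.arbitrary K (r.left i) with hrL
  set rR : ∀ i, Coalgebra.Repr K (r.right i) (H × H) :=
    fun i => Coalgebra.Repr.arbitrary K (r.right i) with hrR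
  rw [rp_τ_tmul g r, map_sum]
  have hterm : ∀ j ∈ r.index,
      rpτinv (K := K) hγ (r.left j ⊗ₜ[K] (g ∘ₗ LinearMap.mulLeft K (r.right j)))
      = ∑ m ∈ (rL j).index,
          (g ∘ₗ LinearMap.mulLeft K (r.right j * Tinv (K := K) hγ ((rL j).right m))) ⊗ₜ[K]
            (rL j).left m := by
    intro j _
    rw [rpτinv_tmul hγ (rL j)]
    refine Finset.sum_congr rfl fun m _ => ?_
    rw [comp_mulLeft]
  rw [Finset.sum_congr rfl hterm]
  -- coassociativity exchange
  set inner1 : H →ₗ[K] H →ₗ[K] Module.Dual K H :=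
    (((LinearMap.mul K H).compl₂ (Tinv (K := K) hγ)).flip).compr₂
      ((mhat (K := K)).flip g) with hinner1
  have hinner1_apply : ∀ v w : H, inner1 v w
      = g ∘ₗ LinearMap.mulLeft K (w * Tinv (K := K) hγ v) := by
    intro v w; rfl
  set Gg : H ⊗[K] (H ⊗[K] H) →ₗ[K] Module.Dual K H ⊗[K] H :=
    LinearMap.rTensor H (TensorProduct.lift inner1) ∘ₗ
      (TensorProduct.comm K H (H ⊗[K] H)).toLinearMap with hGg
  have hGg_apply : ∀ u' v w : H, Gg (u' ⊗ₜ[K] (v ⊗ₜ[K] w))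
      = (g ∘ₗ LinearMap.mulLeft K (w * Tinv (K := K) hγ v)) ⊗ₜ[K] u' := by
    intro u' v w
    simp only [hGg, LinearMap.comp_apply, LinearEquiv.coe_coe, TensorProduct.comm_tmul,
      LinearMap.rTensor_tmul, TensorProduct.lift.tmul]
    rw [hinner1_apply]
  have hex := congrArg Gg (Coalgebra.sum_tmul_tmul_eq r rL rR)
  simp only [map_sum, hGg_apply] at hex
  rw [hex]
  have hcol : ∀ j ∈ r.index,
      ∑ m ∈ (rR j).index,
        (g ∘ₗ LinearMap.mulLeft K ((rR j).right m * Tinv (K := K) hγ ((rR j).left m))) ⊗ₜ[K]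
          r.left j
      = Coalgebra.counit (R := K) (r.right j) • (g ⊗ₜ[K] r.left j) := by
    intro j _
    rw [← TensorProduct.sum_tmul]
    have hsum : ∑ m ∈ (rR j).index,
        (g ∘ₗ LinearMap.mulLeft K ((rR j).right m * Tinv (K := K) hγ ((rR j).left m)))
        = Coalgebra.counit (R := K) (r.right j) • g := by
      have hlin := map_sum ((mhat (K := K)).flip g)
        (fun m => (rR j).right m * Tinv (K := K) hγ ((rR j).left m)) (rR j).index
      have : ∀ m, (mhat (K := K)).flip g ((rR j).right m * Tinv (K := K) hγ ((rR j).left m))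
          = g ∘ₗ LinearMap.mulLeft K ((rR j).right m * Tinv (K := K) hγ ((rR j).left m)) :=
        fun m => rfl
      rw [← Finset.sum_congr rfl fun m _ => this m, ← hlin,
        sum_right_mul_Tinv_left hγ (rR j), map_smul]
      ext x; simp
    rw [hsum, TensorProduct.smul_tmul']
  rw [Finset.sum_congr rfl hcol]
  calc ∑ j ∈ r.index, Coalgebra.counit (R := K) (r.right j) • (g ⊗ₜ[K] r.left j)
      = g ⊗ₜ[K] (∑ j ∈ r.index, Coalgebra.counit (R := K) (r.right j) • r.left j) := by
        rw [TensorProduct.tmul_sum]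
        exact Finset.sum_congr rfl fun j _ => by rw [TensorProduct.tmul_smul]
    _ = g ⊗ₜ[K] u := by rw [sum_counit_smul_left r]

lemma rpτ_comp_rpτinv :
    rp (K := K) (τ (K := K) (H := H)) ∘ₗ rpτinv (K := K) (H := H) hγ = LinearMap.id := by
  apply TensorProduct.ext'
  intro u g
  simp only [LinearMap.comp_apply, LinearMap.id_apply]
  set r := Coalgebra.Repr.arbitrary K u with hru
  set rL : ∀ i, Coalgebra.Repr K (r.left i) (H × H) :=
    fun i => Coalgebra.Repr.arbitrary K (r.left i) with hrL
  set rR : ∀ i, Coalgebra.Repr K (r.right i) (H × H) :=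
    fun i => Coalgebra.Repr.arbitrary K (r.right i) with hrR
  rw [rpτinv_tmul hγ r, map_sum]
  have hterm : ∀ j ∈ r.index,
      rp (K := K) (τ (K := K) (H := H))
        ((g ∘ₗ LinearMap.mulLeft K (Tinv (K := K) hγ (r.right j))) ⊗ₜ[K] r.left j)
      = ∑ m ∈ (rL j).index, (rL j).left m ⊗ₜ[K]
          (g ∘ₗ LinearMap.mulLeft K (Tinv (K := K) hγ (r.right j) * (rL j).right m)) := by
    intro j _
    rw [rp_τ_tmul _ (rL j)]
    refine Finset.sum_congr rfl fun m _ => ?_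
    rw [comp_mulLeft]
  rw [Finset.sum_congr rfl hterm]
  set inner2 : H →ₗ[K] H →ₗ[K] Module.Dual K H :=
    ((((LinearMap.mul K H) ∘ₗ Tinv (K := K) hγ).flip).compr₂
      ((mhat (K := K)).flip g)).flip.flip with hinner2
  have hinner2_apply : ∀ v w : H, ((((LinearMap.mul K H) ∘ₗ Tinv (K := K) hγ).flip).compr₂
      ((mhat (K := K)).flip g)) v w
      = g ∘ₗ LinearMap.mulLeft K (Tinv (K := K) hγ w * v) := fun v w => rfl
  set G2 : H ⊗[K] (H ⊗[K] H) →ₗ[K] H ⊗[K] Module.Dual K H :=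
    LinearMap.lTensor H (TensorProduct.lift
      ((((LinearMap.mul K H) ∘ₗ Tinv (K := K) hγ).flip).compr₂
        ((mhat (K := K)).flip g))) with hG2
  have hG2_apply : ∀ u' v w : H, G2 (u' ⊗ₜ[K] (v ⊗ₜ[K] w))
      = u' ⊗ₜ[K] (g ∘ₗ LinearMap.mulLeft K (Tinv (K := K) hγ w * v)) := by
    intro u' v w
    simp only [hG2, LinearMap.lTensor_tmul, TensorProduct.lift.tmul]
    rw [hinner2_apply]
  have hex := congrArg G2 (Coalgebra.sum_tmul_tmul_eq r rL rR)
  simp only [map_sum, hG2_apply] at hex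
  rw [hex]
  have hcol : ∀ j ∈ r.index,
      ∑ m ∈ (rR j).index, r.left j ⊗ₜ[K]
        (g ∘ₗ LinearMap.mulLeft K (Tinv (K := K) hγ ((rR j).right m) * (rR j).left m))
      = Coalgebra.counit (R := K) (r.right j) • (r.left j ⊗ₜ[K] g) := by
    intro j _
    rw [← TensorProduct.tmul_sum]
    have hsum : ∑ m ∈ (rR j).index,
        (g ∘ₗ LinearMap.mulLeft K (Tinv (K := K) hγ ((rR j).right m) * (rR j).left m))
        = Coalgebra.counit (R := K) (r.right j) • g := by
      have hlin := map_sum ((mhat (K := K)).flip g)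
        (fun m => Tinv (K := K) hγ ((rR j).right m) * (rR j).left m) (rR j).index
      have : ∀ m, (mhat (K := K)).flip g
          (Tinv (K := K) hγ ((rR j).right m) * (rR j).left m)
          = g ∘ₗ LinearMap.mulLeft K (Tinv (K := K) hγ ((rR j).right m) * (rR j).left m) :=
        fun m => rfl
      rw [← Finset.sum_congr rfl fun m _ => this m, ← hlin,
        sum_Tinv_right_mul_left hγ (rR j), map_smul]
      ext x; simp
    rw [hsum, TensorProduct.tmul_smul]
  rw [Finset.sum_congr rfl hcol]
  calc ∑ j ∈ r.index, Coalgebra.counit (R := K) (r.right j) • (r.left j ⊗ₜ[K] g)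
      = (∑ j ∈ r.index, Coalgebra.counit (R := K) (r.right j) • r.left j) ⊗ₜ[K] g := by
        rw [TensorProduct.sum_tmul]
        exact Finset.sum_congr rfl fun j _ => by rw [TensorProduct.smul_tmul']
    _ = u ⊗ₜ[K] g := by rw [sum_counit_smul_left r]

include hγ in
lemma rpτ_bijective :
    Function.Bijective (rp (K := K) (τ (K := K) (H := H))) := by
  refine Function.bijective_iff_has_inverse.mpr ⟨rpτinv (K := K) hγ, ?_, ?_⟩
  · intro x
    exact congrArg (fun f : _ →ₗ[K] _ => f x) (rpτinv_comp_rpτ (K := K) hγ)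
  · intro x
    exact congrArg (fun f : _ →ₗ[K] _ => f x) (rpτ_comp_rpτinv (K := K) hγ)

end RpTau
section RpTauInv

variable (hγ : Function.Bijective (HopfAlgebra.antipode (R := K) (A := H)))

/-- The identification `H ⊗ H* ≅ Hom(H, H)`. -/
noncomputable def Wlin : H ⊗[K] Module.Dual K H →ₗ[K] (H →ₗ[K] H) :=
  dualTensorHom K H H ∘ₗ (TensorProduct.comm K H (Module.Dual K H)).toLinearMap

@[simp] lemma Wlin_tmul (q : H) (k : Module.Dual K H) (x : H) :
    Wlin (K := K) (q ⊗ₜ[K] k) x = k x • q := by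
  simp [Wlin]

lemma Wlin_rp (f : H ⊗[K] H →ₗ[K] H ⊗[K] H) (g : Module.Dual K H) (u x : H) :
    Wlin (K := K) (rp (K := K) f (g ⊗ₜ[K] u)) x = gcol (K := K) g (f (u ⊗ₜ[K] x)) := by
  rw [rp_apply, map_sum]
  simp only [LinearMap.sum_apply, Wlin_tmul, Module.Basis.coord_apply]
  calc ∑ i : Module.Basis.ofVectorSpaceIndex K H, (Module.Basis.ofVectorSpace K H).repr x i •
        gcol (K := K) g (f (u ⊗ₜ[K] Module.Basis.ofVectorSpace K H i))
      = gcol (K := K) g (f (u ⊗ₜ[K]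
          ∑ i : Module.Basis.ofVectorSpaceIndex K H,
            (Module.Basis.ofVectorSpace K H).repr x i • Module.Basis.ofVectorSpace K H i)) := by
        rw [TensorProduct.tmul_sum, map_sum, map_sum]
        exact Finset.sum_congr rfl fun i _ => by
          rw [TensorProduct.tmul_smul, map_smul, map_smul]
    _ = gcol (K := K) g (f (u ⊗ₜ[K] x)) := by rw [Module.Basis.sum_repr]

/-- The recovery operator for `rp τinv`. -/
noncomputable def RecOp : (H →ₗ[K] H) →ₗ[K] (H →ₗ[K] H) where
  toFun φ := (LinearMap.mul' K H ∘ₗ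
      TensorProduct.map (HopfAlgebra.antipode (R := K)) (φ ∘ₗ Tinv (K := K) hγ) ∘ₗ
        Coalgebra.comul) ∘ₗ HopfAlgebra.antipode (R := K)
  map_add' φ ψ := by
    try dsimp only
    simp only [LinearMap.add_comp, TensorProduct.map_add_right, LinearMap.comp_add]
  map_smul' c φ := by
    try dsimp only
    simp only [LinearMap.smul_comp, TensorProduct.map_smul_right, LinearMap.comp_smul,
      RingHom.id_apply]

lemma recop_collapse (g : Module.Dual K H) (u y : H) :
    LinearMap.mul' K H
      (TensorProduct.map (HopfAlgebra.antipode (R := K))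
        ((Wlin (K := K) (rp (K := K) (τinv (K := K) (H := H)) (g ⊗ₜ[K] u))) ∘ₗ
          Tinv (K := K) hγ)
        (Coalgebra.comul (R := K) y))
      = g (Tinv (K := K) hγ y) • u := by
  set r := Coalgebra.Repr.arbitrary K y with hry
  set rL : ∀ i, Coalgebra.Repr K (r.left i) (H × H) :=
    fun i => Coalgebra.Repr.arbitrary K (r.left i) with hrL
  set rR : ∀ i, Coalgebra.Repr K (r.right i) (H × H) :=
    fun i => Coalgebra.Repr.arbitrary K (r.right i) with hrR
  rw [← r.eq, map_sum, map_sum]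
  have hψ : ∀ i ∈ r.index,
      LinearMap.mul' K H (HopfAlgebra.antipode (R := K) (r.left i) ⊗ₜ[K]
        (Wlin (K := K) (rp (K := K) (τinv (K := K) (H := H)) (g ⊗ₜ[K] u)))
          (Tinv (K := K) hγ (r.right i)))
      = ∑ j ∈ (rR i).index, g (Tinv (K := K) hγ ((rR i).right j)) •
          (HopfAlgebra.antipode (R := K) (r.left i) * ((rR i).left j * u)) := by
    intro i _
    rw [Wlin_rp]
    rw [τinv_tmul (TRepr (K := K) hγ (rR i)) u, map_sum, TensorProduct.tmul_sum, map_sum]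
    have hindex : (TRepr (K := K) hγ (rR i)).index = (rR i).index := rfl
    rw [hindex]
    have : ∀ j ∈ (rR i).index,
        gcol (K := K) g ((TRepr (K := K) hγ (rR i)).left j ⊗ₜ[K]
          (HopfAlgebra.antipode (R := K) ((TRepr (K := K) hγ (rR i)).right j) * u))
        = g (Tinv (K := K) hγ ((rR i).right j)) • ((rR i).left j * u) := by
      intro j _
      have h1 : (TRepr (K := K) hγ (rR i)).left j = Tinv (K := K) hγ ((rR i).right j) := rfl
      have h2 : (TRepr (K := K) hγ (rR i)).right j = Tinv (K := K) hγ ((rR i).left j) := rfl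
      rw [gcol_tmul, h1, h2, S_Tinv]
    refine Finset.sum_congr rfl fun j _ => ?_
    rw [this j ‹j ∈ (rR i).index›, TensorProduct.tmul_smul, map_smul]
    rfl
  -- the simp below computes `map S ψ` on each pure tensor first
  simp only [TensorProduct.map_tmul, LinearMap.comp_apply]
  rw [Finset.sum_congr rfl hψ]
  -- coassociativity exchange
  set b3 : H →ₗ[K] H →ₗ[K] H :=
    LinearMap.mk₂ K (fun v w => g (Tinv (K := K) hγ w) • (v * u))
      (fun v v' w => by (try dsimp only); rw [add_mul, smul_add])
      (fun c v w => by (try dsimp only); rw [smul_mul_assoc, smul_comm])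
      (fun v w w' => by (try dsimp only); rw [map_add, map_add, add_smul])
      (fun c v w => by (try dsimp only); rw [map_smul, map_smul, smul_eq_mul, mul_smul]) with hb3
  set G3 : H ⊗[K] (H ⊗[K] H) →ₗ[K] H :=
    TensorProduct.lift (((LinearMap.mul K H) ∘ₗ
      HopfAlgebra.antipode (R := K)).compl₂ (TensorProduct.lift b3)) with hG3
  have hG3_apply : ∀ u' v w : H, G3 (u' ⊗ₜ[K] (v ⊗ₜ[K] w))
      = g (Tinv (K := K) hγ w) •
          (HopfAlgebra.antipode (R := K) u' * (v * u)) := by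
    intro u' v w
    simp only [hG3, TensorProduct.lift.tmul, LinearMap.compl₂_apply, LinearMap.comp_apply,
      LinearMap.mul_apply', hb3, LinearMap.mk₂_apply]
    rw [mul_smul_comm]
  have hex := congrArg G3 (Coalgebra.sum_tmul_tmul_eq r rL rR)
  simp only [map_sum, hG3_apply] at hex
  rw [← hex]
  -- collapse the inner sums
  have hcol : ∀ i ∈ r.index,
      ∑ j ∈ (rL i).index, g (Tinv (K := K) hγ (r.right i)) •
        (HopfAlgebra.antipode (R := K) ((rL i).left j) * ((rL i).right j * u))
      = (g (Tinv (K := K) hγ (r.right i)) * Coalgebra.counit (R := K) (r.left i)) • u := by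
    intro i _
    rw [← Finset.smul_sum]
    have : ∑ j ∈ (rL i).index,
        HopfAlgebra.antipode (R := K) ((rL i).left j) * ((rL i).right j * u)
        = Coalgebra.counit (R := K) (r.left i) • u := by
      rw [← Finset.sum_congr rfl (fun j _ => mul_assoc _ ((rL i).right j) u),
        ← Finset.sum_mul, HopfAlgebra.sum_antipode_mul_eq_smul (rL i), smul_mul_assoc, one_mul]
    rw [this, smul_smul]
  rw [Finset.sum_congr rfl hcol]
  calc ∑ i ∈ r.index, (g (Tinv (K := K) hγ (r.right i)) *
        Coalgebra.counit (R := K) (r.left i)) • u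
      = (∑ i ∈ r.index, g (Tinv (K := K) hγ
          (Coalgebra.counit (R := K) (r.left i) • r.right i))) • u := by
        rw [← Finset.sum_smul]
        congr 1
        exact Finset.sum_congr rfl fun i _ => by
          rw [map_smul, map_smul, smul_eq_mul, mul_comm]
    _ = g (Tinv (K := K) hγ y) • u := by
        rw [← map_sum, ← map_sum, sum_counit_smul_right r]

lemma recop_rp_τinv :
    RecOp (K := K) (H := H) hγ ∘ₗ Wlin (K := K) ∘ₗ rp (K := K) (τinv (K := K) (H := H))
      = dualTensorHom K H H := by
  apply TensorProduct.ext'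
  intro g u
  ext x
  simp only [LinearMap.comp_apply]
  show (RecOp (K := K) hγ (Wlin (K := K) (rp (K := K) (τinv (K := K) (H := H)) (g ⊗ₜ[K] u)))) x
    = (dualTensorHom K H H (g ⊗ₜ[K] u)) x
  have : (RecOp (K := K) hγ
      (Wlin (K := K) (rp (K := K) (τinv (K := K) (H := H)) (g ⊗ₜ[K] u)))) x
      = LinearMap.mul' K H
        (TensorProduct.map (HopfAlgebra.antipode (R := K))
          ((Wlin (K := K) (rp (K := K) (τinv (K := K) (H := H)) (g ⊗ₜ[K] u))) ∘ₗ
            Tinv (K := K) hγ)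
          (Coalgebra.comul (R := K) (HopfAlgebra.antipode (R := K) x))) := rfl
  rw [this, recop_collapse hγ g u, Tinv_S, dualTensorHom_apply]

include hγ in
lemma rpτinv_bijective :
    Function.Bijective (rp (K := K) (τinv (K := K) (H := H))) := by
  have hinj : Function.Injective (rp (K := K) (τinv (K := K) (H := H))) := by
    have hd : Function.Injective (dualTensorHom K H H) := by
      intro x y hxy
      have := congrArg (dualTensorHomEquivOfBasis
        (N := H) (Module.Free.chooseBasis K H)).symm hxy
      rwa [dualTensorHomEquivOfBasis_symm_cancel_left,
        dualTensorHomEquivOfBasis_symm_cancel_left] at this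
    intro x y hxy
    apply hd
    have h1 := congrArg (fun f : _ →ₗ[K] _ => f x) (recop_rp_τinv (K := K) (H := H) hγ)
    have h2 := congrArg (fun f : _ →ₗ[K] _ => f y) (recop_rp_τinv (K := K) (H := H) hγ)
    simp only [LinearMap.comp_apply] at h1 h2
    rw [← h1, ← h2, hxy]
  refine ⟨hinj, ?_⟩
  have hfr : Module.finrank K (Module.Dual K H ⊗[K] H)
      = Module.finrank K (H ⊗[K] Module.Dual K H) :=
    LinearEquiv.finrank_eq (TensorProduct.comm K (Module.Dual K H) H)
  exact (LinearMap.injective_iff_surjective_of_finrank_eq_finrank (K := K) (V := Module.Dual K H ⊗[K] H)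
    (V₂ := H ⊗[K] Module.Dual K H) hfr).mp hinj

end RpTauInv

/-- a finite-dimensional Hopf algebra `H` over a field `K` with invertible
antipode gives a rigid T-matrix `(Vect_K, H, σ, τ)`: the naturality and pentagon-type
equations hold, `τ` is invertible, and the partial transposes `r_p(τ^{±1})` (w.r.t. the
canonical duality) are invertible. -/
theorem statement10
    (hγ : Function.Bijective (HopfAlgebra.antipode (R := K) (A := H))) :
    (L1 (τ (K := K) (H := H)) ∘ₗ L2 (σ (K := K)) ∘ₗ L1 (σ (K := K)) =
        L2 (σ (K := K)) ∘ₗ L1 (σ (K := K)) ∘ₗ L2 (τ (K := K))) ∧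
    (L1 (τ (K := K) (H := H)) ∘ₗ L2 (σ (K := K)) ∘ₗ L1 (τ (K := K)) =
        L2 (τ (K := K)) ∘ₗ L1 (τ (K := K)) ∘ₗ L2 (τ (K := K))) ∧
    ∃ τi : H ⊗[K] H →ₗ[K] H ⊗[K] H,
      τ (K := K) (H := H) ∘ₗ τi = LinearMap.id ∧
      τi ∘ₗ τ (K := K) (H := H) = LinearMap.id ∧
      Function.Bijective (rp (K := K) (τ (K := K) (H := H))) ∧
      Function.Bijective (rp (K := K) τi) :=
  ⟨eq_one, eq_two, τinv, τ_comp_τinv, τinv_comp_τ, rpτ_bijective hγ, rpτinv_bijective hγ⟩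

end Stmt10
end
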